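/- arXiv:0911.4732 — 7 statements merged into one kernel-verified Lean document; each statement's English description precedes it below -/
import Mathlib

section
/- Let G be a forest that is bipartite with parts U and W, and let A be its |U|×|W| bipartite adjacency matrix over F_2. Then the rank of A over F_2 equals the size of a maximum matching in G. -/
/-- The bipartite adjacency matrix over `F_2` of the edge set `S ⊆ U × W`. -/
def bipMat {U W : Type*} [DecidableEq U] [DecidableEq W] (S : Finset (U × W)) :
    Matrix U W (ZMod 2) :=
  Matrix.of fun u w => if (u, w) ∈ S then 1 else 0

/-- The simple graph on `U ⊕ W` determined by the bipartite edge set `E ⊆ U × W`. -/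
def bipGraph {U W : Type*} (E : Finset (U × W)) : SimpleGraph (U ⊕ W) :=
  SimpleGraph.fromRel fun x y => ∃ p ∈ E, x = Sum.inl p.1 ∧ y = Sum.inr p.2

namespace ForestAux
open SimpleGraph Finset Matrix


lemma dist_ne_of_adj {V : Type*} [DecidableEq V] {G : SimpleGraph V} (hG : G.IsAcyclic) {x y r : V}
    (hxy : G.Adj x y) (hxr : G.Reachable x r) : G.dist x r ≠ G.dist y r := by
  intro h
  have hyr : G.Reachable y r := (hxy.symm.reachable).trans hxr
  obtain ⟨p, hp, hpl⟩ := hxr.exists_path_of_dist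
  obtain ⟨q, hq, hql⟩ := hyr.exists_path_of_dist
  have hxs : x ∉ q.support := by
    intro hx
    have h1 : G.dist x r ≤ (q.dropUntil x hx).length := dist_le _
    have h2 := congr_arg Walk.length (q.take_spec hx)
    rw [Walk.length_append] at h2
    have h3 : (q.takeUntil x hx).length = 0 := by omega
    have h4 : y = x := Walk.eq_of_length_eq_zero h3
    exact hxy.ne h4.symm
  have hc : (Walk.cons hxy q).IsPath := hq.cons hxs
  have hu := hG.path_unique ⟨p, hp⟩ ⟨Walk.cons hxy q, hc⟩
  have hl := congr_arg (fun p : G.Path x r => p.val.length) hu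
  simp [Walk.length_cons, hpl, hql] at hl
  omega

lemma acyclic_card_edgeFinset_lt {V : Type*} [Fintype V] [Nonempty V] (G : SimpleGraph V)
    [Fintype G.edgeSet] (hG : G.IsAcyclic) : G.edgeFinset.card < Fintype.card V := by
  classical
  set root : V → V := fun v => (G.connectedComponentMk v).out with hrootdef
  have hreach : ∀ v, G.Reachable v (root v) := by
    intro v
    rw [← ConnectedComponent.eq]
    exact ((G.connectedComponentMk v).out_eq).symm
  have hrooteq : ∀ {u v : V}, G.Reachable u v → root u = root v := by
    intro u v h
    simp only [hrootdef]
    rw [ConnectedComponent.sound h]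
  set P : Sym2 V → V → Prop :=
    fun e v => ∃ y, e = s(v, y) ∧ G.Adj v y ∧ G.dist y (root v) < G.dist v (root v) with hP
  have hex : ∀ e ∈ G.edgeFinset, ∃ v, P e v := by
    intro e he
    induction e with
    | _ x y =>
      rw [mem_edgeFinset, mem_edgeSet] at he
      have hry : root y = root x := hrooteq he.symm.reachable
      have hne := dist_ne_of_adj hG he (hreach x)
      rcases lt_or_gt_of_ne hne with hlt | hgt
      · exact ⟨y, x, Sym2.eq_swap, he.symm, by rwa [hry]⟩
      · exact ⟨x, y, rfl, he, hgt⟩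
  set f : Sym2 V → V := fun e =>
    if h : ∃ v, P e v then h.choose else Classical.arbitrary V with hf
  have hfP : ∀ e ∈ G.edgeFinset, P e (f e) := by
    intro e he
    simp only [hf, dif_pos (hex e he)]
    exact (hex e he).choose_spec
  set r0 : V := root (Classical.arbitrary V) with hr0def
  have hr0 : root r0 = r0 := (hrooteq (hreach (Classical.arbitrary V))).symm
  have hfne : ∀ e ∈ G.edgeFinset, f e ≠ r0 := by
    intro e he hcon
    obtain ⟨y, -, -, hd⟩ := hfP e he
    rw [hcon, hr0, SimpleGraph.dist_self] at hd
    omega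
  have hmaps : ∀ e ∈ G.edgeFinset, f e ∈ Finset.univ.erase r0 :=
    fun e he => Finset.mem_erase.2 ⟨hfne e he, Finset.mem_univ _⟩
  have hinj : Set.InjOn f ↑G.edgeFinset := by
    intro e1 he1 e2 he2 hfeq
    rw [Finset.mem_coe] at he1 he2
    obtain ⟨y1, hey1, h1, hd1⟩ := hfP e1 he1
    obtain ⟨y2, hey2, h2, hd2⟩ := hfP e2 he2
    rw [hfeq] at hey1 h1 hd1
    by_cases hy : y1 = y2
    · exact hey1.trans (by rw [hy, ← hey2])
    · exfalso
      set v := f e2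
      set r := root v
      have hvr : G.Reachable v r := hreach v
      obtain ⟨q1, hq1, hql1⟩ := ((h1.symm.reachable).trans hvr).exists_path_of_dist
      obtain ⟨q2, hq2, hql2⟩ := ((h2.symm.reachable).trans hvr).exists_path_of_dist
      have hc1len : (Walk.cons h1 q1).length = G.dist v r := by
        have := dist_le (Walk.cons h1 q1)
        rw [Walk.length_cons, hql1] at *
        omega
      have hc2len : (Walk.cons h2 q2).length = G.dist v r := by
        have := dist_le (Walk.cons h2 q2)
        rw [Walk.length_cons, hql2] at *
        omega
      have hc1 := (Walk.cons h1 q1).isPath_of_length_eq_dist hc1len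
      have hc2 := (Walk.cons h2 q2).isPath_of_length_eq_dist hc2len
      have hu := hG.path_unique ⟨Walk.cons h1 q1, hc1⟩ ⟨Walk.cons h2 q2, hc2⟩
      have hs := congr_arg (fun p : G.Path v r => p.val.support) hu
      simp only [Walk.support_cons] at hs
      rw [q1.support_eq_cons, q2.support_eq_cons] at hs
      simp at hs
      rw [← q1.cons_tail_support, ← q2.cons_tail_support] at hs
      exact hy (List.cons.inj hs).1
  have h1 : G.edgeFinset.card ≤ (Finset.univ.erase r0).card :=
    Finset.card_le_card_of_injOn f hmaps hinj
  have h2 : (Finset.univ.erase r0).card < Fintype.card V := by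
    rw [Finset.card_erase_of_mem (Finset.mem_univ _), Finset.card_univ]
    have : 0 < Fintype.card V := Fintype.card_pos
    omega
  omega


lemma isAcyclic_mono {V : Type*} {G G' : SimpleGraph V} (h : G ≤ G') (hac : G'.IsAcyclic) :
    G.IsAcyclic := by
  intro v c hc
  exact hac (c.mapLe h) ((Walk.mapLe_isCycle h).2 hc)

lemma isAcyclic_comap {V V' : Type*} {G : SimpleGraph V} (f : V' → V) (hf : Function.Injective f)
    (hac : G.IsAcyclic) : (G.comap f).IsAcyclic := by
  intro v c hc
  exact hac (c.map ⟨f, fun a => a⟩) (hc.map hf)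

lemma bipGraph_mono {U W : Type*} {H E : Finset (U × W)} (h : H ⊆ E) :
    bipGraph H ≤ bipGraph E := by
  intro x y hxy
  rw [bipGraph, fromRel_adj] at hxy ⊢
  refine ⟨hxy.1, ?_⟩
  rcases hxy.2 with ⟨p, hp, h1, h2⟩ | ⟨p, hp, h1, h2⟩
  · exact Or.inl ⟨p, h hp, h1, h2⟩
  · exact Or.inr ⟨p, h hp, h1, h2⟩

lemma finset_forest_bound {U W : Type*} [DecidableEq U] [DecidableEq W]
    {E H : Finset (U × W)} (hHE : H ⊆ E) (hac : (bipGraph E).IsAcyclic) (hne : H.Nonempty) :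
    H.card + 1 ≤ (H.image Prod.fst).card + (H.image Prod.snd).card := by
  classical
  set U' := H.image Prod.fst with hU'
  set W' := H.image Prod.snd with hW'
  set f : (↥U' ⊕ ↥W') → (U ⊕ W) := Sum.map (fun a => a.val) (fun a => a.val) with hfdef
  have hf : Function.Injective f :=
    Sum.map_injective.2 ⟨Subtype.val_injective, Subtype.val_injective⟩
  set G' := (bipGraph H).comap f with hG'
  have hacG' : G'.IsAcyclic := isAcyclic_comap f hf (isAcyclic_mono (bipGraph_mono hHE) hac)
  obtain ⟨p0, hp0⟩ := hne
  haveI : Nonempty (↥U' ⊕ ↥W') := ⟨Sum.inl ⟨p0.1, mem_image_of_mem _ hp0⟩⟩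
  haveI : DecidableRel G'.Adj := Classical.decRel _
  have hb := acyclic_card_edgeFinset_lt G' hacG'
  have hinj : H.card ≤ G'.edgeFinset.card := by
    haveI : Nonempty (Sym2 (↥U' ⊕ ↥W')) := ⟨s(Classical.arbitrary _, Classical.arbitrary _)⟩
    set g : U × W → Sym2 (↥U' ⊕ ↥W') := fun p =>
      if h : p ∈ H then
        s(Sum.inl ⟨p.1, mem_image_of_mem _ h⟩, Sum.inr ⟨p.2, mem_image_of_mem _ h⟩)
      else Classical.arbitrary _ with hg
    apply Finset.card_le_card_of_injOn g
    · intro p hp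
      rw [Finset.mem_coe, mem_edgeFinset]
      simp only [hg, dif_pos (Finset.mem_coe.1 hp)]
      rw [mem_edgeSet]
      show G'.Adj _ _
      rw [hG', comap_adj, hfdef]
      show (bipGraph H).Adj (Sum.inl p.1) (Sum.inr p.2)
      rw [bipGraph, fromRel_adj]
      exact ⟨by simp, Or.inl ⟨p, hp, rfl, rfl⟩⟩
    · intro p hp q hq hpq
      rw [Finset.mem_coe] at hp hq
      simp only [hg, dif_pos hp, dif_pos hq, Sym2.eq_iff] at hpq
      rcases hpq with ⟨ha, hb⟩ | ⟨ha, -⟩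
      · have h1 : p.1 = q.1 := congrArg Subtype.val (Sum.inl.inj ha)
        have h2 : p.2 = q.2 := congrArg Subtype.val (Sum.inr.inj hb)
        exact Prod.ext h1 h2
      · exact absurd ha (by simp)
  have hcard : Fintype.card (↥U' ⊕ ↥W') = U'.card + W'.card := by
    rw [Fintype.card_sum, Fintype.card_coe, Fintype.card_coe]
  omega

lemma comb_contradiction {U W : Type*} [DecidableEq U] [DecidableEq W]
    {E S : Finset (U × W)} (hac : (bipGraph E).IsAcyclic) (hSE : S ⊆ E)
    (hmatch : ∀ e ∈ S, ∀ f ∈ S, e ≠ f → e.1 ≠ f.1 ∧ e.2 ≠ f.2) (hS : S.Nonempty)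
    (hev : ∀ w, Even ((E.filter fun p => p.1 ∈ S.image Prod.fst ∧ p.2 = w).card)) : False := by
  classical
  set U' := S.image Prod.fst with hU'
  set H := E.filter (fun p => p.1 ∈ U') with hH
  have hSH : S ⊆ H := fun e he => mem_filter.2 ⟨hSE he, mem_image_of_mem _ he⟩
  have hSfst : U'.card = S.card := by
    apply card_image_of_injOn
    intro e he f hf h1
    by_contra hne
    exact (hmatch e he f hf hne).1 h1
  have hSsnd : (S.image Prod.snd).card = S.card := by
    apply card_image_of_injOn
    intro e he f hf h1
    by_contra hne
    exact (hmatch e he f hf hne).2 h1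
  set W' := H.image Prod.snd with hW'
  have hsub : S.image Prod.snd ⊆ W' := image_subset_image hSH
  have hSW' : S.card ≤ W'.card := hSsnd ▸ card_le_card hsub
  have hfib : H.card = ∑ w ∈ W', (H.filter fun p => p.2 = w).card :=
    card_eq_sum_card_fiberwise (fun p hp => mem_image_of_mem _ hp)
  have hfib2 : ∀ w ∈ W', 2 ≤ (H.filter fun p => p.2 = w).card := by
    intro w hw
    have heq : H.filter (fun p => p.2 = w) = E.filter fun p => p.1 ∈ U' ∧ p.2 = w := by
      rw [hH, filter_filter]
    have hevw := hev w
    rw [← heq] at hevw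
    obtain ⟨p, hp⟩ := mem_image.1 hw
    have hpos : 0 < (H.filter fun p => p.2 = w).card :=
      card_pos.2 ⟨p, mem_filter.2 ⟨hp.1, hp.2⟩⟩
    obtain ⟨k, hk⟩ := hevw
    omega
  have hHge : 2 * W'.card ≤ H.card := by
    rw [hfib]
    calc 2 * W'.card = ∑ _w ∈ W', 2 := by rw [Finset.sum_const, smul_eq_mul, mul_comm]
    _ ≤ _ := Finset.sum_le_sum hfib2
  have hbound := finset_forest_bound (filter_subset _ _) hac (hS.mono hSH)
  have hfst : (H.image Prod.fst).card ≤ S.card := by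
    rw [← hSfst]
    apply card_le_card
    intro u hu
    obtain ⟨p, hp, hpu⟩ := mem_image.1 hu
    exact hpu ▸ (mem_filter.1 hp).2
  rw [← hH, ← hW'] at hbound
  omega


lemma zmod2_cases (x : ZMod 2) : x = 0 ∨ x = 1 := by
  have h : ∀ y : ZMod 2, y = 0 ∨ y = 1 := by decide
  exact h x

lemma matching_rows_li {U W : Type*} [Fintype U] [Fintype W] [DecidableEq U] [DecidableEq W]
    {E M : Finset (U × W)} (hforest : (bipGraph E).IsAcyclic) (hME : M ⊆ E)
    (hmatch : ∀ e ∈ M, ∀ f ∈ M, e ≠ f → e.1 ≠ f.1 ∧ e.2 ≠ f.2) :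
    LinearIndependent (ZMod 2) (fun e : ↥M => bipMat E e.val.1) := by
  classical
  rw [Fintype.linearIndependent_iff]
  intro g hg
  by_contra hcon
  push_neg at hcon
  obtain ⟨i0, hi0⟩ := hcon
  set S : Finset (U × W) := (Finset.univ.filter (fun i : ↥M => g i ≠ 0)).image Subtype.val with hSdef
  have hSM : S ⊆ M := by
    intro e he
    obtain ⟨i, -, rfl⟩ := mem_image.1 he
    exact i.2
  have hSne : S.Nonempty := ⟨i0.val, mem_image_of_mem _ (mem_filter.2 ⟨mem_univ _, hi0⟩)⟩
  have hmatchS : ∀ e ∈ S, ∀ f ∈ S, e ≠ f → e.1 ≠ f.1 ∧ e.2 ≠ f.2 :=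
    fun e he f hf => hmatch e (hSM he) f (hSM hf)
  refine comb_contradiction hforest (hSM.trans hME) hmatchS hSne ?_
  intro w
  -- from the vanishing linear combination, the fiber count is even
  have hgw := congr_fun hg w
  simp only [Finset.sum_apply, Pi.smul_apply, smul_eq_mul, Pi.zero_apply] at hgw
  have h1 : ∑ i ∈ Finset.univ.filter (fun i : ↥M => g i ≠ 0), bipMat E i.val.1 w = 0 := by
    calc ∑ i ∈ Finset.univ.filter (fun i : ↥M => g i ≠ 0), bipMat E i.val.1 w
        = ∑ i : ↥M, g i * bipMat E i.val.1 w := by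
          rw [Finset.sum_filter]
          refine Finset.sum_congr rfl fun i _ => ?_
          rcases zmod2_cases (g i) with h | h <;> simp [h]
      _ = 0 := hgw
  have h2 : ∑ e ∈ S, bipMat E e.1 w = 0 := by
    rw [hSdef, Finset.sum_image (fun a _ b _ h => Subtype.val_injective h)]
    exact h1
  have h3 : ((S.filter fun e => (e.1, w) ∈ E).card : ZMod 2) = 0 := by
    have hb : (∑ e ∈ S, if (e.1, w) ∈ E then (1 : ZMod 2) else 0)
        = ((S.filter fun e => (e.1, w) ∈ E).card : ZMod 2) := by
      simpa using Finset.sum_boole (s := S) (p := fun e => (e.1, w) ∈ E)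
    have h2' : (∑ e ∈ S, if (e.1, w) ∈ E then (1 : ZMod 2) else 0) = 0 := h2
    rw [← hb]
    exact h2'
  have h4 : Even (S.filter fun e => (e.1, w) ∈ E).card := by
    rwa [ZMod.natCast_eq_zero_iff, ← even_iff_two_dvd] at h3
  have h5 : (E.filter fun p => p.1 ∈ S.image Prod.fst ∧ p.2 = w).card
      = (S.filter fun e => (e.1, w) ∈ E).card := by
    apply Finset.card_bij (fun p _ => (p.1, w)) ?_ ?_ ?_ |>.symm
    · intro e he
      rw [mem_filter] at he ⊢
      exact ⟨he.2, mem_image.2 ⟨e, he.1, rfl⟩, rfl⟩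
    · intro e he f hf hef
      have h1 : e.1 = f.1 := (Prod.ext_iff.1 hef).1
      by_contra hne
      exact (hmatchS e (mem_of_mem_filter _ he) f (mem_of_mem_filter _ hf) hne).1 h1
    · intro p hp
      rw [mem_filter] at hp
      obtain ⟨e, he, he1⟩ := mem_image.1 hp.2.1
      refine ⟨e, mem_filter.2 ⟨he, ?_⟩, ?_⟩
      · rw [he1, ← hp.2.2]
        exact hp.1
      · exact Prod.ext he1 hp.2.2.symm
  rw [h5]
  exact h4

lemma matching_card_le_rank {U W : Type*} [Fintype U] [Fintype W] [DecidableEq U] [DecidableEq W]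
    {E M : Finset (U × W)} (hforest : (bipGraph E).IsAcyclic) (hME : M ⊆ E)
    (hmatch : ∀ e ∈ M, ∀ f ∈ M, e ≠ f → e.1 ≠ f.1 ∧ e.2 ≠ f.2) :
    M.card ≤ (bipMat E).rank := by
  classical
  have hli := matching_rows_li hforest hME hmatch
  have hcard := linearIndependent_iff_card_eq_finrank_span.1 hli
  rw [Fintype.card_coe] at hcard
  rw [(bipMat E).rank_eq_finrank_span_row, hcard]
  apply Submodule.finrank_mono
  apply Submodule.span_mono
  rintro x ⟨e, rfl⟩
  exact ⟨e.val.1, rfl⟩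

lemma exists_rowBasis {K : Type*} [Field K] {m n : Type*} [Fintype m] [Fintype n]
    [DecidableEq m] (A : Matrix m n K) :
    ∃ T : Finset m, T.card = A.rank ∧ LinearIndependent K (fun i : ↥T => A i.val) := by
  classical
  obtain ⟨b, hbt, hspan, hli⟩ := exists_linearIndependent K (Set.range A)
  have hfin : b.Finite := (Set.finite_range A).subset hbt
  haveI : Fintype b := hfin.fintype
  have hchoice : ∀ x : b, ∃ i : m, A i = x.val := fun x => hbt x.2
  choose φ hφ using hchoice
  have hφinj : Function.Injective φ := by
    intro x y hxy
    apply Subtype.ext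
    rw [← hφ x, ← hφ y, hxy]
  set T : Finset m := Finset.univ.image φ with hT
  have hmem : ∀ i : ↥T, A i.val ∈ b := by
    rintro ⟨i, hi⟩
    obtain ⟨x, -, rfl⟩ := Finset.mem_image.1 hi
    rw [hφ x]
    exact x.2
  have hψinj : Function.Injective (fun i : ↥T => (⟨A i.val, hmem i⟩ : b)) := by
    rintro ⟨i, hi⟩ ⟨j, hj⟩ hij
    have hAij : A i = A j := congrArg Subtype.val hij
    obtain ⟨x, -, hx⟩ := Finset.mem_image.1 hi
    obtain ⟨y, -, hy⟩ := Finset.mem_image.1 hj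
    have hxy : x = y := by
      apply Subtype.ext
      rw [← hφ x, ← hφ y, hx, hy]
      exact hAij
    apply Subtype.ext
    show i = j
    rw [← hx, ← hy, hxy]
  have hliT : LinearIndependent K (fun i : ↥T => A i.val) :=
    hli.comp (fun i : ↥T => (⟨A i.val, hmem i⟩ : b)) hψinj
  refine ⟨T, ?_, hliT⟩
  have h1 : T.card = Fintype.card b := by
    rw [hT, Finset.card_image_of_injective _ hφinj, Finset.card_univ]
  rw [h1, A.rank_eq_finrank_span_row, Matrix.row, ← hspan, finrank_span_set_eq_card hli,
    Set.toFinset_card]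

lemma exists_matching_card_rank {U W : Type*} [Fintype U] [Fintype W]
    [DecidableEq U] [DecidableEq W] (E : Finset (U × W)) :
    ∃ M ⊆ E, (∀ e ∈ M, ∀ f ∈ M, e ≠ f → e.1 ≠ f.1 ∧ e.2 ≠ f.2) ∧
      M.card = (bipMat E).rank := by
  classical
  set A := bipMat E with hA
  obtain ⟨T, hTcard, hTli⟩ := exists_rowBasis A
  set A1 : Matrix ↥T W (ZMod 2) := A.submatrix Subtype.val id with hA1
  have hA1rank : A1.rank = T.card := by
    have hli : LinearIndependent (ZMod 2) (fun i : ↥T => A1 i) := hTli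
    rw [LinearIndependent.rank_matrix (M := A1) hli, Fintype.card_coe]
  obtain ⟨T', hT'card, hT'li⟩ := exists_rowBasis A1ᵀ
  have hT'T : T'.card = T.card := by rw [hT'card, Matrix.rank_transpose, hA1rank]
  set C : Matrix ↥T' ↥T (ZMod 2) := A1ᵀ.submatrix Subtype.val id with hC
  have hCli : LinearIndependent (ZMod 2) (fun i : ↥T' => C i) := hT'li
  have hce : Fintype.card ↥T = Fintype.card ↥T' := by
    rw [Fintype.card_coe, Fintype.card_coe, hT'T]
  set eqv : ↥T ≃ ↥T' := Fintype.equivOfCardEq hce with heqv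
  set D : Matrix ↥T ↥T (ZMod 2) := C.submatrix eqv id with hD
  have hDli : LinearIndependent (ZMod 2) (fun i : ↥T => D i) := hCli.comp eqv eqv.injective
  have hDdet : D.det ≠ 0 :=
    ((Matrix.isUnit_iff_isUnit_det D).1 (Matrix.linearIndependent_rows_iff_isUnit.1 hDli)).ne_zero
  have hperm : ∃ σ : Equiv.Perm ↥T, ∀ i, D (σ i) i ≠ 0 := by
    by_contra hc
    push_neg at hc
    apply hDdet
    rw [Matrix.det_apply]
    apply Finset.sum_eq_zero
    intro σ _
    obtain ⟨i, hi⟩ := hc σ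
    have hz : ∏ j : ↥T, D (σ j) j = 0 := Finset.prod_eq_zero (Finset.mem_univ i) hi
    rw [hz, smul_zero]
  obtain ⟨σ, hσ⟩ := hperm
  have hmemE : ∀ i : ↥T, (i.val, (eqv (σ i)).val) ∈ E := by
    intro i
    have h0 := hσ i
    have hDval : D (σ i) i = if (i.val, (eqv (σ i)).val) ∈ E then (1 : ZMod 2) else 0 := rfl
    rw [hDval] at h0
    by_contra hcon
    rw [if_neg hcon] at h0
    exact h0 rfl
  set M : Finset (U × W) := Finset.univ.image (fun i : ↥T => (i.val, (eqv (σ i)).val)) with hM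
  have hMinj : Function.Injective (fun i : ↥T => (i.val, (eqv (σ i)).val)) := by
    intro i j hij
    exact Subtype.ext (Prod.ext_iff.1 hij).1
  refine ⟨M, ?_, ?_, ?_⟩
  · intro p hp
    obtain ⟨i, -, rfl⟩ := Finset.mem_image.1 hp
    exact hmemE i
  · intro p hp q hq hpq
    obtain ⟨i, -, rfl⟩ := Finset.mem_image.1 hp
    obtain ⟨j, -, rfl⟩ := Finset.mem_image.1 hq
    have hij : i ≠ j := fun h => hpq (by rw [h])
    constructor
    · exact fun h => hij (Subtype.ext h)
    · exact fun h => hij (σ.injective (eqv.injective (Subtype.ext h)))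
  · rw [hM, Finset.card_image_of_injective _ hMinj, Finset.card_univ, Fintype.card_coe,
      hTcard]

end ForestAux

/-- Let `G` be a forest with parts `U`, `W` and `|U|×|W|` bipartite adjacency matrix `A`
over `F_2`.  Then the rank of `A` over `F_2` equals the size of a maximum matching of `G`:
there is a matching of size `rk_2(A)`, and every matching has size at most `rk_2(A)`. -/
theorem rank_bipMat_eq_maxMatching_of_forest {U W : Type*} [Fintype U] [Fintype W]
    [DecidableEq U] [DecidableEq W] (E : Finset (U × W))
    (hforest : (bipGraph E).IsAcyclic) :
    (∃ M ⊆ E, (∀ e ∈ M, ∀ f ∈ M, e ≠ f → e.1 ≠ f.1 ∧ e.2 ≠ f.2) ∧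
        M.card = (bipMat E).rank)
    ∧ ∀ M ⊆ E, (∀ e ∈ M, ∀ f ∈ M, e ≠ f → e.1 ≠ f.1 ∧ e.2 ≠ f.2) →
        M.card ≤ (bipMat E).rank := by
  constructor
  · exact ForestAux.exists_matching_card_rank E
  · intro M hME hmatch
    exact ForestAux.matching_card_le_rank hforest hME hmatch
end

section
/- Let G = (U ∪ W, E) be a connected bipartite graph in which every vertex of W has degree at most 2, and let B be its |U|×|W| bipartite adjacency matrix over F_2. Then rk_2(B) = |U| if some vertex of W has degree 1, and rk_2(B) = |U| - 1 if every vertex of W has degree exactly 2. -/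
open Matrix

section Aux

variable {U W : Type*} [Fintype U] [Fintype W] [DecidableEq U] [DecidableEq W]
  (E : Finset (U × W))

/-- The neighbor set of `w` in `U`. -/
private def nbr (w : W) : Finset U := Finset.univ.filter (fun u => (u, w) ∈ E)

private lemma card_nbr (w : W) : (nbr E w).card = (E.filter fun p => p.2 = w).card := by
  have himg : E.filter (fun p => p.2 = w) = (nbr E w).image (fun u => (u, w)) := by
    ext ⟨a, b⟩
    simp only [Finset.mem_filter, Finset.mem_image, nbr, Finset.mem_univ, true_and]
    constructor
    · rintro ⟨h1, rfl⟩; exact ⟨a, h1, rfl⟩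
    · rintro ⟨u, hu, h⟩; cases h; exact ⟨hu, rfl⟩
  rw [himg, Finset.card_image_of_injective]
  intro a b h; simpa using h

private lemma mem_ker_iff (x : U → ZMod 2) :
    x ∈ LinearMap.ker (bipMat E)ᵀ.mulVecLin ↔ ∀ w, ∑ u ∈ nbr E w, x u = 0 := by
  simp only [LinearMap.mem_ker, Matrix.mulVecLin_apply, funext_iff, Pi.zero_apply,
    Matrix.mulVec, dotProduct, Matrix.transpose_apply, bipMat, Matrix.of_apply,
    ite_mul, one_mul, zero_mul, nbr, Finset.sum_filter]

private lemma col_eq {x : U → ZMod 2} {w : W}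
    (hdeg : (E.filter fun p => p.2 = w).card ≤ 2)
    (hsum : ∑ u ∈ nbr E w, x u = 0) {u u' : U}
    (hu : (u, w) ∈ E) (hu' : (u', w) ∈ E) : x u = x u' := by
  by_cases h : u = u'
  · rw [h]
  · have hmem : u ∈ nbr E w := by simp [nbr, hu]
    have hmem' : u' ∈ nbr E w := by simp [nbr, hu']
    have hs : nbr E w = {u, u'} := by
      refine (Finset.eq_of_subset_of_card_le ?_ ?_).symm
      · intro a ha; simp only [Finset.mem_insert, Finset.mem_singleton] at ha
        rcases ha with rfl | rfl <;> assumption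
      · rw [Finset.card_pair h, card_nbr]; exact hdeg
    rw [hs, Finset.sum_pair h] at hsum
    rw [eq_neg_of_add_eq_zero_left hsum, CharTwo.neg_eq]

end Aux

/-- Let `G = (U ∪ W, E)` be a connected bipartite graph (with at least one edge) in which
every vertex of `W` has degree at most `2`, and let `B` be its bipartite adjacency matrix
over `F_2`.  Then `rk_2(B) = |U|` if some vertex of `W` has degree `1`, and
`rk_2(B) = |U| - 1` if every vertex of `W` has degree exactly `2`. -/
theorem rank_bipMat_connected_degree_le_two {U W : Type*} [Fintype U] [Fintype W]
    [DecidableEq U] [DecidableEq W] (E : Finset (U × W)) (hne : E.Nonempty)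
    (hconn : (bipGraph E).Connected)
    (hdeg : ∀ w : W, (E.filter fun p => p.2 = w).card ≤ 2) :
    ((∃ w : W, (E.filter fun p => p.2 = w).card = 1) →
        (bipMat E).rank = Fintype.card U)
    ∧ ((∀ w : W, (E.filter fun p => p.2 = w).card = 2) →
        (bipMat E).rank = Fintype.card U - 1) := by
  classical
  obtain ⟨p0, hp0⟩ := hne
  -- Rank via the kernel of the transpose
  have hrk : (bipMat E).rank
      + Module.finrank (ZMod 2) (LinearMap.ker (bipMat E)ᵀ.mulVecLin) = Fintype.card U := by
    rw [← Matrix.rank_transpose]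
    show Module.finrank (ZMod 2) (LinearMap.range (bipMat E)ᵀ.mulVecLin) + _ = _
    rw [LinearMap.finrank_range_add_finrank_ker, Module.finrank_pi]
  -- Every kernel element is constant on `U`
  have hconst : ∀ x ∈ LinearMap.ker (bipMat E)ᵀ.mulVecLin, ∀ u u' : U, x u = x u' := by
    intro x hx
    rw [mem_ker_iff] at hx
    set F : U ⊕ W → ZMod 2 := fun a =>
      Sum.rec (fun u => x u) (fun w => if h : ∃ u, (u, w) ∈ E then x h.choose else 0) a with hF
    have hadj : ∀ a b, (bipGraph E).Adj a b → F a = F b := by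
      have key : ∀ u w, (u, w) ∈ E → F (Sum.inl u) = F (Sum.inr w) := by
        intro u w huw
        have hex : ∃ u, (u, w) ∈ E := ⟨u, huw⟩
        show x u = _
        rw [hF]
        simp only [dif_pos hex]
        exact col_eq E (hdeg w) (hx w) huw hex.choose_spec
      intro a b hab
      rw [bipGraph, SimpleGraph.fromRel_adj] at hab
      obtain ⟨-, ⟨p, hp, rfl, rfl⟩ | ⟨p, hp, rfl, rfl⟩⟩ := hab
      · exact key p.1 p.2 hp
      · exact (key p.1 p.2 hp).symm
    have hwalk : ∀ a b, (bipGraph E).Reachable a b → F a = F b := by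
      intro a b hab
      obtain ⟨p⟩ := hab
      induction p with
      | nil => rfl
      | cons h p ih => exact (hadj _ _ h).trans ih
    intro u u'
    exact hwalk _ _ (hconn.preconnected (Sum.inl u) (Sum.inl u'))
  constructor
  · -- some column of degree 1 : kernel is trivial
    rintro ⟨w, hw⟩
    have hcard1 : (nbr E w).card = 1 := by rw [card_nbr]; exact hw
    obtain ⟨u0, hu0⟩ := Finset.card_eq_one.mp hcard1
    have hker : LinearMap.ker (bipMat E)ᵀ.mulVecLin = ⊥ := by
      rw [LinearMap.ker_eq_bot']
      intro x hx
      have hx' := (mem_ker_iff E x).mp hx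
      have h0 : x u0 = 0 := by
        have := hx' w
        rwa [hu0, Finset.sum_singleton] at this
      funext u
      rw [Pi.zero_apply, hconst x hx u u0, h0]
    rw [hker, finrank_bot] at hrk
    omega
  · -- all columns of degree 2 : kernel is spanned by the all-ones vector
    intro h2
    have hone : (fun _ => 1 : U → ZMod 2) ∈ LinearMap.ker (bipMat E)ᵀ.mulVecLin := by
      rw [mem_ker_iff]
      intro w
      rw [Finset.sum_const, card_nbr, h2 w]
      decide
    have hker : LinearMap.ker (bipMat E)ᵀ.mulVecLin
        = Submodule.span (ZMod 2) {(fun _ => 1 : U → ZMod 2)} := by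
      apply le_antisymm
      · intro x hx
        rw [Submodule.mem_span_singleton]
        refine ⟨x p0.1, ?_⟩
        funext u
        simp [hconst x hx u p0.1]
      · rw [Submodule.span_singleton_le_iff_mem]; exact hone
    have hne1 : (fun _ => 1 : U → ZMod 2) ≠ 0 := by
      intro h
      have := congrFun h p0.1
      simp at this
    rw [hker, finrank_span_singleton hne1] at hrk
    omega
end

section
/- Let G = (U ∪ W, E) be a bipartite graph in which every vertex of W has degree at most 2. Then for every S ⊆ E, the F_2-rank of the bipartite adjacency matrix of (U ∪ W, S) equals |U| − κ'(S), where κ'(S) is the number of connected components C of (U ∪ W, S) such that every W-vertex of C has degree exactly 2 in C and C contains at least one vertex of U. -/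
set_option linter.unusedSectionVars false

/-- The number of pure connected components of `(U ∪ W, S)`: components containing a vertex
of `U` in which every `W`-vertex has degree exactly `2`. -/
noncomputable def pureComponents {U W : Type*} [Fintype U] [Fintype W]
    [DecidableEq U] [DecidableEq W] (S : Finset (U × W)) : ℕ :=
  Nat.card {c : (bipGraph S).ConnectedComponent //
    (∃ u : U, (bipGraph S).connectedComponentMk (Sum.inl u) = c) ∧
    ∀ w : W, (bipGraph S).connectedComponentMk (Sum.inr w) = c →
      (S.filter fun p => p.2 = w).card = 2}

section Aux

variable {U W : Type*} [Fintype U] [Fintype W] [DecidableEq U] [DecidableEq W]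

/-- neighbors of `w` in `S`. -/
def Nbr (S : Finset (U × W)) (w : W) : Finset U :=
  Finset.univ.filter fun u => (u, w) ∈ S

lemma mem_Nbr {S : Finset (U × W)} {u : U} {w : W} : u ∈ Nbr S w ↔ (u, w) ∈ S := by
  simp [Nbr]

lemma card_Nbr (S : Finset (U × W)) (w : W) :
    (Nbr S w).card = (S.filter fun p => p.2 = w).card := by
  apply Finset.card_bij (fun u _ => (u, w))
  · intro u hu
    rw [mem_Nbr] at hu
    simp [hu]
  · intro a _ b _ h
    exact (Prod.mk.injEq _ _ _ _).mp h |>.1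
  · intro p hp
    simp only [Finset.mem_filter] at hp
    refine ⟨p.1, ?_, ?_⟩
    · rw [mem_Nbr, ← hp.2]; exact hp.1
    · rw [← hp.2]

lemma bipGraph_adj_cases {S : Finset (U × W)} {a b : U ⊕ W}
    (h : (bipGraph S).Adj a b) :
    ∃ u w, (u, w) ∈ S ∧ ((a = Sum.inl u ∧ b = Sum.inr w) ∨ (a = Sum.inr w ∧ b = Sum.inl u)) := by
  rw [bipGraph, SimpleGraph.fromRel_adj] at h
  obtain ⟨-, h | h⟩ := h
  · obtain ⟨p, hp, h1, h2⟩ := h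
    exact ⟨p.1, p.2, hp, .inl ⟨h1, h2⟩⟩
  · obtain ⟨p, hp, h1, h2⟩ := h
    exact ⟨p.1, p.2, hp, .inr ⟨h2, h1⟩⟩

lemma bipGraph_adj_of_mem {S : Finset (U × W)} {u : U} {w : W} (h : (u, w) ∈ S) :
    (bipGraph S).Adj (Sum.inl u) (Sum.inr w) := by
  rw [bipGraph, SimpleGraph.fromRel_adj]
  exact ⟨by simp, .inl ⟨(u, w), h, rfl, rfl⟩⟩

variable {S : Finset (U × W)} {x : U → ZMod 2}

/-- if both `u, u'` are neighbors of a `w` of degree ≤ 2, a kernel vector agrees on them. -/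
lemma eq_of_both_mem (hdeg2 : ∀ w, (Nbr S w).card ≤ 2)
    (hx : ∀ w, ∑ u ∈ Nbr S w, x u = 0) {u u' : U} {w : W}
    (h : u ∈ Nbr S w) (h' : u' ∈ Nbr S w) : x u = x u' := by
  by_cases huu : u = u'
  · rw [huu]
  · have hsub : ({u, u'} : Finset U) ⊆ Nbr S w := by
      intro a ha
      rcases Finset.mem_insert.mp ha with rfl | ha
      · exact h
      · rw [Finset.mem_singleton] at ha; exact ha ▸ h'
    have hcard : ({u, u'} : Finset U).card = 2 := by
      rw [Finset.card_insert_of_notMem (by simpa using huu), Finset.card_singleton]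
    have heq : ({u, u'} : Finset U) = Nbr S w :=
      Finset.eq_of_subset_of_card_le hsub (by rw [hcard]; exact hdeg2 w)
    have hsum := hx w
    rw [← heq, Finset.sum_pair huu] at hsum
    have h2 : ∀ a b : ZMod 2, a + b = 0 → a = b := by decide
    exact h2 _ _ hsum

open Classical in
/-- extension of a kernel vector to all vertices. -/
noncomputable def gval (S : Finset (U × W)) (x : U → ZMod 2) : U ⊕ W → ZMod 2 :=
  Sum.elim x fun w => if h : (Nbr S w).Nonempty then x h.choose else 0

lemma gval_adj (hdeg2 : ∀ w, (Nbr S w).card ≤ 2)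
    (hx : ∀ w, ∑ u ∈ Nbr S w, x u = 0) {a b : U ⊕ W}
    (h : (bipGraph S).Adj a b) : gval S x a = gval S x b := by
  classical
  obtain ⟨u, w, hm, ⟨rfl, rfl⟩ | ⟨rfl, rfl⟩⟩ := bipGraph_adj_cases h
  · have hne : (Nbr S w).Nonempty := ⟨u, mem_Nbr.mpr hm⟩
    have : gval S x (Sum.inr w) = x hne.choose := by
      simp only [gval, Sum.elim_inr, dif_pos hne]
    rw [this]
    exact eq_of_both_mem hdeg2 hx (mem_Nbr.mpr hm) hne.choose_spec
  · have hne : (Nbr S w).Nonempty := ⟨u, mem_Nbr.mpr hm⟩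
    have : gval S x (Sum.inr w) = x hne.choose := by
      simp only [gval, Sum.elim_inr, dif_pos hne]
    rw [this]
    exact (eq_of_both_mem hdeg2 hx (mem_Nbr.mpr hm) hne.choose_spec).symm

lemma gval_reachable (hdeg2 : ∀ w, (Nbr S w).card ≤ 2)
    (hx : ∀ w, ∑ u ∈ Nbr S w, x u = 0) {a b : U ⊕ W}
    (h : (bipGraph S).Reachable a b) : gval S x a = gval S x b := by
  obtain ⟨p⟩ := h
  induction p with
  | nil => rfl
  | cons hadj p ih => rw [gval_adj hdeg2 hx hadj]; exact ih

lemma ker_const (hdeg2 : ∀ w, (Nbr S w).card ≤ 2)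
    (hx : ∀ w, ∑ u ∈ Nbr S w, x u = 0) {u u' : U}
    (h : (bipGraph S).connectedComponentMk (Sum.inl u) =
         (bipGraph S).connectedComponentMk (Sum.inl u')) : x u = x u' :=
  gval_reachable hdeg2 hx (SimpleGraph.ConnectedComponent.exact h)

lemma ker_zero (hdeg2 : ∀ w, (Nbr S w).card ≤ 2)
    (hx : ∀ w, ∑ u ∈ Nbr S w, x u = 0) {u : U} {w : W}
    (hw : (bipGraph S).connectedComponentMk (Sum.inr w) =
          (bipGraph S).connectedComponentMk (Sum.inl u))
    (hc : (Nbr S w).card ≠ 2) : x u = 0 := by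
  obtain ⟨p⟩ := SimpleGraph.ConnectedComponent.exact hw
  cases p with
  | cons hadj q =>
    rename_i y
    obtain ⟨u0, w0, hm, ⟨h1, h2⟩ | ⟨h1, h2⟩⟩ := bipGraph_adj_cases hadj
    · exact absurd h1 (by simp)
    · injection h1 with hww
      subst hww
      subst h2
      -- Nbr S w has card 1, equal {u0}
      have h1le : 1 ≤ (Nbr S w).card := Finset.card_pos.mpr ⟨u0, mem_Nbr.mpr hm⟩
      have hcard1 : (Nbr S w).card = 1 := by
        have := hdeg2 w; omega
      obtain ⟨a, ha⟩ := Finset.card_eq_one.mp hcard1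
      have hu0 : u0 = a := by
        have := mem_Nbr.mpr hm; rw [ha, Finset.mem_singleton] at this; exact this
      have hxa : x a = 0 := by
        have := hx w; rw [ha, Finset.sum_singleton] at this; exact this
      -- x u = x u0
      have hreach : (bipGraph S).connectedComponentMk (Sum.inl u0) =
          (bipGraph S).connectedComponentMk (Sum.inl u) := by
        apply SimpleGraph.ConnectedComponent.sound
        exact (SimpleGraph.Adj.reachable (bipGraph_adj_of_mem hm)).trans
          ((SimpleGraph.ConnectedComponent.exact hw))
      rw [ker_const hdeg2 hx hreach.symm, hu0, hxa]

/-- the pure-component predicate. -/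
def PureP (S : Finset (U × W)) (c : (bipGraph S).ConnectedComponent) : Prop :=
  (∃ u : U, (bipGraph S).connectedComponentMk (Sum.inl u) = c) ∧
  ∀ w : W, (bipGraph S).connectedComponentMk (Sum.inr w) = c →
    (S.filter fun p => p.2 = w).card = 2

open Classical in
/-- linear embedding of pure-component indicator space into kernel. -/
noncomputable def Psi (S : Finset (U × W)) :
    ({c : (bipGraph S).ConnectedComponent // PureP S c} → ZMod 2) →ₗ[ZMod 2] (U → ZMod 2) where
  toFun f u :=
    if h : PureP S ((bipGraph S).connectedComponentMk (Sum.inl u)) then f ⟨_, h⟩ else 0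
  map_add' f g := by
    funext u
    by_cases h : PureP S ((bipGraph S).connectedComponentMk (Sum.inl u)) <;> simp [h]
  map_smul' c f := by
    funext u
    by_cases h : PureP S ((bipGraph S).connectedComponentMk (Sum.inl u)) <;> simp [h]

lemma Psi_congr {f : {c : (bipGraph S).ConnectedComponent // PureP S c} → ZMod 2}
    {u u' : U}
    (h : (bipGraph S).connectedComponentMk (Sum.inl u) =
         (bipGraph S).connectedComponentMk (Sum.inl u')) :
    Psi S f u = Psi S f u' := by
  classical
  show (if hh : PureP S ((bipGraph S).connectedComponentMk (Sum.inl u)) then f ⟨_, hh⟩ else 0)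
      = _
  rw [h]
  rfl

lemma Psi_injective : Function.Injective (Psi S) := by
  classical
  rw [injective_iff_map_eq_zero]
  intro f hf
  funext c
  obtain ⟨c, hc⟩ := c
  obtain ⟨u, hu⟩ := hc.1
  have hp : PureP S ((bipGraph S).connectedComponentMk (Sum.inl u)) := hu ▸ hc
  have h0 := congrFun hf u
  simp only [Psi, LinearMap.coe_mk, AddHom.coe_mk, Pi.zero_apply] at h0
  rw [dif_pos hp] at h0
  calc f ⟨c, hc⟩ = f ⟨_, hp⟩ := (congrArg f (Subtype.ext hu)).symm
    _ = 0 := h0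

open Classical in
lemma Psi_apply (f : {c : (bipGraph S).ConnectedComponent // PureP S c} → ZMod 2) (u : U) :
    Psi S f u =
      if h : PureP S ((bipGraph S).connectedComponentMk (Sum.inl u)) then f ⟨_, h⟩ else 0 :=
  rfl

lemma Psi_sum (hdeg2 : ∀ w, (Nbr S w).card ≤ 2)
    (f : {c : (bipGraph S).ConnectedComponent // PureP S c} → ZMod 2) (w : W) :
    ∑ u ∈ Nbr S w, Psi S f u = 0 := by
  classical
  rcases Finset.eq_empty_or_nonempty (Nbr S w) with he | hne
  · rw [he, Finset.sum_empty]
  · have hcomp : ∀ u ∈ Nbr S w, (bipGraph S).connectedComponentMk (Sum.inl u) =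
        (bipGraph S).connectedComponentMk (Sum.inr w) := fun u hu =>
      SimpleGraph.ConnectedComponent.sound (bipGraph_adj_of_mem (mem_Nbr.mp hu)).reachable
    by_cases hp : PureP S ((bipGraph S).connectedComponentMk (Sum.inr w))
    · have hdw : (Nbr S w).card = 2 := by rw [card_Nbr]; exact hp.2 w rfl
      obtain ⟨a, b, hab, hset⟩ := Finset.card_eq_two.mp hdw
      have ha : a ∈ Nbr S w := by rw [hset]; simp
      have hb : b ∈ Nbr S w := by rw [hset]; simp
      rw [hset, Finset.sum_pair hab,
        Psi_congr (f := f) ((hcomp a ha).trans (hcomp b hb).symm)]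
      exact (by decide : ∀ t : ZMod 2, t + t = 0) _
    · apply Finset.sum_eq_zero
      intro u hu
      rw [Psi_apply, dif_neg fun hh => hp ((hcomp u hu) ▸ hh)]

lemma mulVecLin_transpose_apply (y : U → ZMod 2) (w : W) :
    ((bipMat S).transpose.mulVecLin y) w = ∑ u ∈ Nbr S w, y u := by
  classical
  simp only [Matrix.mulVecLin_apply, Matrix.mulVec, dotProduct, Matrix.transpose_apply,
    bipMat, Matrix.of_apply, Nbr, Finset.sum_filter, ite_mul, one_mul, zero_mul]

lemma range_Psi (hdeg2 : ∀ w, (Nbr S w).card ≤ 2) :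
    LinearMap.range (Psi S) = LinearMap.ker (bipMat S).transpose.mulVecLin := by
  classical
  ext y
  simp only [LinearMap.mem_range, LinearMap.mem_ker]
  constructor
  · rintro ⟨f, rfl⟩
    funext w
    rw [mulVecLin_transpose_apply, Psi_sum hdeg2 f w]; rfl
  · intro hy
    have hx : ∀ w, ∑ u ∈ Nbr S w, y u = 0 := fun w => by
      rw [← mulVecLin_transpose_apply, hy]; rfl
    refine ⟨fun c => y c.2.1.choose, ?_⟩
    funext u
    rw [Psi_apply]
    by_cases h : PureP S ((bipGraph S).connectedComponentMk (Sum.inl u))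
    · rw [dif_pos h]
      exact ker_const hdeg2 hx h.1.choose_spec
    · rw [dif_neg h]
      rw [PureP, not_and] at h
      push_neg at h
      obtain ⟨w, hw, hcard⟩ := h ⟨u, rfl⟩
      refine (ker_zero hdeg2 hx hw ?_).symm
      rw [card_Nbr]; exact hcard

end Aux

/-- Let `G = (U ∪ W, E)` be a bipartite graph in which every vertex of `W` has degree at
most `2`.  Then for every `S ⊆ E`, the `F_2`-rank of the bipartite adjacency matrix of
`(U ∪ W, S)` equals `|U| − κ'(S)`, where `κ'(S)` is the number of pure connected
components of `(U ∪ W, S)`. -/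
theorem rank_bipMat_eq_card_sub_pure {U W : Type*} [Fintype U] [Fintype W]
    [DecidableEq U] [DecidableEq W] (E : Finset (U × W))
    (hdeg : ∀ w : W, (E.filter fun p => p.2 = w).card ≤ 2)
    (S : Finset (U × W)) (hS : S ⊆ E) :
    (bipMat S).rank = Fintype.card U - pureComponents S := by
  classical
  have hdeg2 : ∀ w, (Nbr S w).card ≤ 2 := fun w => by
    rw [card_Nbr]
    exact le_trans (Finset.card_le_card (Finset.filter_subset_filter _ hS)) (hdeg w)
  set L := (bipMat S).transpose.mulVecLin with hL
  haveI : Fintype {c : (bipGraph S).ConnectedComponent // PureP S c} := Fintype.ofFinite _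
  have h1 : (bipMat S).rank = Module.finrank (ZMod 2) (LinearMap.range L) := by
    rw [← Matrix.rank_transpose]; rfl
  have h2 := LinearMap.finrank_range_add_finrank_ker L
  rw [Module.finrank_fintype_fun_eq_card] at h2
  have h3 : Module.finrank (ZMod 2) (LinearMap.ker L) = pureComponents S := by
    rw [hL, ← range_Psi hdeg2, LinearMap.finrank_range_of_inj Psi_injective,
      Module.finrank_fintype_fun_eq_card, pureComponents]
    exact (Nat.card_eq_fintype_card (α := {c : (bipGraph S).ConnectedComponent // PureP S c})).symm
  rw [h1, ← h3]
  omega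
end

section
/- Let G = (U ∪ W, E) be a bipartite graph, and for an assignment σ: U ∪ W → {0,1} let w(σ) be the number of edges both of whose endpoints get label 1. Then for every real η, Σ_σ (1+η)^{w(σ)} (1−η)^{|E|−w(σ)} = 2^{|U|+|W|} · Σ_{S ⊆ E} (1/2)^{rk_2(S)} (−η)^{|S|}, where rk_2(S) is the F_2-rank of the bipartite adjacency matrix of (U ∪ W, S). -/
/-- sign helper -/
noncomputable def eps (z : ZMod 2) : ℝ := if z = 1 then -1 else 1

lemma zmod2_em : ∀ z : ZMod 2, z = 0 ∨ z = 1 := by decide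

lemma eps_zero : eps 0 = 1 := by norm_num [eps]

lemma eps_add (a b : ZMod 2) : eps (a + b) = eps a * eps b := by
  rcases zmod2_em a with ha | ha <;> rcases zmod2_em b with hb | hb <;>
    subst ha <;> subst hb <;> norm_num [eps] <;> decide

lemma eps_sum {ι : Type*} (s : Finset ι) (f : ι → ZMod 2) :
    ∏ i ∈ s, eps (f i) = eps (∑ i ∈ s, f i) := by
  classical
  induction s using Finset.induction with
  | empty => simp [eps_zero]
  | insert _ _ h ih => simp [Finset.prod_insert h, Finset.sum_insert h, eps_add, ih]

/-- Bool ≃ ZMod 2 -/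
def bz : Bool ≃ ZMod 2 :=
  ⟨fun b => if b then 1 else 0, fun z => z = 1, by decide, by decide⟩

lemma sum_eps_dot {W : Type*} [Fintype W] [DecidableEq W] (v : W → ZMod 2) :
    ∑ y : W → ZMod 2, eps (dotProduct v y)
      = if v = 0 then (2 : ℝ) ^ Fintype.card W else 0 := by
  by_cases h : v = 0
  · subst h
    simp [zero_dotProduct, eps_zero, Finset.card_univ]
  · rw [if_neg h]
    obtain ⟨w0, hw0⟩ := Function.ne_iff.mp h
    have hv1 : v w0 = 1 := by
      rcases zmod2_em (v w0) with h' | h' 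
      · exact absurd h' hw0
      · exact h'
    set d : W → ZMod 2 := Pi.single w0 1 with hd
    have key : ∀ y : W → ZMod 2, eps (dotProduct v (y + d))
        = - eps (dotProduct v y) := by
      intro y
      rw [dotProduct_add, hd, dotProduct_single, hv1, one_mul, eps_add]
      norm_num [eps]
    have h2 : ∑ y : W → ZMod 2, eps (dotProduct v (y + d))
        = ∑ y : W → ZMod 2, eps (dotProduct v y) :=
      Fintype.sum_equiv (Equiv.addRight d) _ _ (fun y => rfl)
    have h3 : ∑ y : W → ZMod 2, eps (dotProduct v y)
        = - ∑ y : W → ZMod 2, eps (dotProduct v y) := by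
      calc ∑ y : W → ZMod 2, eps (dotProduct v y)
          = ∑ y : W → ZMod 2, eps (dotProduct v (y + d)) := h2.symm
        _ = ∑ y : W → ZMod 2, - eps (dotProduct v y) :=
            Finset.sum_congr rfl fun y _ => key y
        _ = - ∑ y : W → ZMod 2, eps (dotProduct v y) := by
            rw [Finset.sum_neg_distrib]
    linarith

open Matrix in
lemma card_ker {U W : Type*} [Fintype U] [Fintype W] [DecidableEq U] [DecidableEq W]
    (A : Matrix U W (ZMod 2)) :
    (Finset.univ.filter fun x : U → ZMod 2 => Matrix.vecMul x A = 0).card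
      = 2 ^ (Fintype.card U - A.rank) := by
  classical
  have hpred : ∀ x : U → ZMod 2, (Matrix.vecMul x A = 0) ↔ Aᵀ.mulVecLin x = 0 := by
    intro x
    rw [Matrix.mulVecLin_apply, Matrix.mulVec_transpose]
  have h1 : (Finset.univ.filter fun x : U → ZMod 2 => Matrix.vecMul x A = 0).card
      = Fintype.card {x : U → ZMod 2 // Aᵀ.mulVecLin x = 0} := by
    rw [Fintype.card_subtype]
    exact Finset.card_bij (fun x _ => x) (by simp [hpred]) (by simp) (by
      intro b hb; exact ⟨b, by simpa [hpred] using hb, rfl⟩)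
  have h2 : Fintype.card {x : U → ZMod 2 // Aᵀ.mulVecLin x = 0}
      = Fintype.card (LinearMap.ker Aᵀ.mulVecLin) := by
    apply Fintype.card_congr
    exact Equiv.subtypeEquivRight (fun x => (LinearMap.mem_ker).symm)
  have h3 : Fintype.card (LinearMap.ker Aᵀ.mulVecLin)
      = 2 ^ Module.finrank (ZMod 2) (LinearMap.ker Aᵀ.mulVecLin) := by
    have := Module.card_eq_pow_finrank (K := ZMod 2) (V := LinearMap.ker Aᵀ.mulVecLin)
    simpa [ZMod.card] using this
  have h4 : Module.finrank (ZMod 2) (LinearMap.ker Aᵀ.mulVecLin)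
      = Fintype.card U - A.rank := by
    have hrn := LinearMap.finrank_range_add_finrank_ker (Aᵀ.mulVecLin)
    have hr : Module.finrank (ZMod 2) (LinearMap.range Aᵀ.mulVecLin) = A.rank := by
      rw [show Module.finrank (ZMod 2) (LinearMap.range Aᵀ.mulVecLin) = Aᵀ.rank from rfl,
        Matrix.rank_transpose]
    rw [hr, Module.finrank_pi] at hrn
    omega
  rw [h1, h2, h3, h4]

open Matrix in
lemma char_sum {U W : Type*} [Fintype U] [Fintype W] [DecidableEq U] [DecidableEq W]
    (S : Finset (U × W)) :
    ∑ σ : U ⊕ W → Bool, ∏ q ∈ S,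
        (if σ (Sum.inl q.1) = true ∧ σ (Sum.inr q.2) = true then (-1 : ℝ) else 1)
      = 2 ^ (Fintype.card U + Fintype.card W) * (1 / 2 : ℝ) ^ (bipMat S).rank := by
  classical
  -- reindex by (x, y) : (U → ZMod 2) × (W → ZMod 2)
  let e : (U ⊕ W → Bool) ≃ (U → ZMod 2) × (W → ZMod 2) :=
    (Equiv.sumArrowEquivProdArrow U W Bool).trans
      ((Equiv.arrowCongr (Equiv.refl U) bz).prodCongr (Equiv.arrowCongr (Equiv.refl W) bz))
  have step1 : ∑ σ : U ⊕ W → Bool, ∏ q ∈ S,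
        (if σ (Sum.inl q.1) = true ∧ σ (Sum.inr q.2) = true then (-1 : ℝ) else 1)
      = ∑ p : (U → ZMod 2) × (W → ZMod 2), ∏ q ∈ S, eps (p.1 q.1 * p.2 q.2) := by
    apply Fintype.sum_equiv e
    intro σ
    apply Finset.prod_congr rfl
    intro q _
    have h1 : (e σ).1 q.1 = bz (σ (Sum.inl q.1)) := rfl
    have h2 : (e σ).2 q.2 = bz (σ (Sum.inr q.2)) := rfl
    rw [h1, h2]
    cases hσ1 : σ (Sum.inl q.1) <;> cases hσ2 : σ (Sum.inr q.2) <;>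
      simp [bz, eps]
  rw [step1, Fintype.sum_prod_type]
  -- per-pair term as eps of bilinear form
  have step2 : ∀ (x : U → ZMod 2) (y : W → ZMod 2),
      ∏ q ∈ S, eps (x q.1 * y q.2) = eps (x ⬝ᵥ (bipMat S) *ᵥ y) := by
    intro x y
    rw [eps_sum]
    congr 1
    have : x ⬝ᵥ (bipMat S) *ᵥ y
        = ∑ p : U × W, (if p ∈ S then x p.1 * y p.2 else 0) := by
      rw [Fintype.sum_prod_type]
      simp only [dotProduct, Matrix.mulVec, dotProduct, bipMat, Matrix.of_apply,
        Finset.mul_sum, mul_ite, ite_mul, mul_one, one_mul, mul_zero, zero_mul]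
    rw [this, Finset.sum_ite_mem, Finset.univ_inter]
  simp only [step2]
  -- inner sum over y
  have step3 : ∀ x : U → ZMod 2,
      ∑ y : W → ZMod 2, eps (x ⬝ᵥ (bipMat S) *ᵥ y)
        = if Matrix.vecMul x (bipMat S) = 0 then (2 : ℝ) ^ Fintype.card W else 0 := by
    intro x
    rw [← sum_eps_dot (Matrix.vecMul x (bipMat S))]
    apply Finset.sum_congr rfl
    intro y _
    rw [dotProduct_mulVec]
  simp only [step3]
  rw [← Finset.sum_filter, Finset.sum_const, nsmul_eq_mul, card_ker]
  -- arithmetic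
  have hle : (bipMat S).rank ≤ Fintype.card U := Matrix.rank_le_card_height _
  have h2 : (2 : ℝ) ^ (Fintype.card U - (bipMat S).rank) * 2 ^ (bipMat S).rank
      = 2 ^ Fintype.card U := by
    rw [← pow_add]
    congr 1
    omega
  have h2pos : (0 : ℝ) < 2 ^ (bipMat S).rank := by positivity
  push_cast
  rw [div_pow, one_pow]
  field_simp
  rw [mul_comm ((2:ℝ) ^ (Fintype.card U - (bipMat S).rank)) _, mul_assoc, h2, ← pow_add]
  rw [Nat.add_comm]

/-- For a bipartite graph `G = (U ∪ W, E)` and any real `η`: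
`Σ_σ (1+η)^{w(σ)} (1−η)^{|E|−w(σ)} = 2^{|U|+|W|} Σ_{S ⊆ E} (1/2)^{rk_2(S)} (−η)^{|S|}`,
where `w(σ)` is the number of edges both of whose endpoints get label `1` and `rk_2(S)` is
the `F_2`-rank of the bipartite adjacency matrix of `(U ∪ W, S)`. -/
theorem pbis_eq_rank_sum {U W : Type*} [Fintype U] [Fintype W]
    [DecidableEq U] [DecidableEq W] (E : Finset (U × W)) (η : ℝ) :
    ∑ σ : U ⊕ W → Bool,
        (1 + η) ^ (E.filter fun p => σ (Sum.inl p.1) = true ∧ σ (Sum.inr p.2) = true).card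
          * (1 - η) ^ (E.card -
            (E.filter fun p => σ (Sum.inl p.1) = true ∧ σ (Sum.inr p.2) = true).card)
      = 2 ^ (Fintype.card U + Fintype.card W) *
          ∑ S ∈ E.powerset, (1 / 2 : ℝ) ^ (bipMat S).rank * (-η) ^ S.card := by
  classical
  have stepA : ∀ σ : U ⊕ W → Bool,
      (1 + η) ^ (E.filter fun p => σ (Sum.inl p.1) = true ∧ σ (Sum.inr p.2) = true).card
        * (1 - η) ^ (E.card -
          (E.filter fun p => σ (Sum.inl p.1) = true ∧ σ (Sum.inr p.2) = true).card)
      = ∏ q ∈ E, ((-η) *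
          (if σ (Sum.inl q.1) = true ∧ σ (Sum.inr q.2) = true then (-1 : ℝ) else 1) + 1) := by
    intro σ
    have hc : (E.filter fun p => ¬(σ (Sum.inl p.1) = true ∧ σ (Sum.inr p.2) = true)).card
        = E.card
          - (E.filter fun p => σ (Sum.inl p.1) = true ∧ σ (Sum.inr p.2) = true).card := by
      have := Finset.card_filter_add_card_filter_not (s := E)
        (p := fun p => σ (Sum.inl p.1) = true ∧ σ (Sum.inr p.2) = true)
      omega
    calc (1 + η) ^ (E.filter fun p =>
            σ (Sum.inl p.1) = true ∧ σ (Sum.inr p.2) = true).card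
          * (1 - η) ^ (E.card -
            (E.filter fun p => σ (Sum.inl p.1) = true ∧ σ (Sum.inr p.2) = true).card)
        = (∏ _q ∈ E.filter fun p =>
              σ (Sum.inl p.1) = true ∧ σ (Sum.inr p.2) = true, (1 + η))
          * ∏ _q ∈ E.filter fun p =>
              ¬(σ (Sum.inl p.1) = true ∧ σ (Sum.inr p.2) = true), (1 - η) := by
          rw [Finset.prod_const, Finset.prod_const, hc]
      _ = (∏ q ∈ E.filter fun p => σ (Sum.inl p.1) = true ∧ σ (Sum.inr p.2) = true,
            ((-η) * (if σ (Sum.inl q.1) = true ∧ σ (Sum.inr q.2) = true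
              then (-1 : ℝ) else 1) + 1))
          * ∏ q ∈ E.filter fun p => ¬(σ (Sum.inl p.1) = true ∧ σ (Sum.inr p.2) = true),
            ((-η) * (if σ (Sum.inl q.1) = true ∧ σ (Sum.inr q.2) = true
              then (-1 : ℝ) else 1) + 1) := by
          congr 1
          · refine Finset.prod_congr rfl fun q hq => ?_
            rw [Finset.mem_filter] at hq
            rw [if_pos hq.2]; ring
          · refine Finset.prod_congr rfl fun q hq => ?_
            rw [Finset.mem_filter] at hq
            rw [if_neg hq.2]; ring
      _ = _ := Finset.prod_filter_mul_prod_filter_not E _ _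
  have stepB : ∀ σ : U ⊕ W → Bool,
      (∏ q ∈ E, ((-η) *
          (if σ (Sum.inl q.1) = true ∧ σ (Sum.inr q.2) = true then (-1 : ℝ) else 1) + 1))
      = ∑ t ∈ E.powerset, (-η) ^ t.card *
          ∏ q ∈ t, (if σ (Sum.inl q.1) = true ∧ σ (Sum.inr q.2) = true
            then (-1 : ℝ) else 1) := by
    intro σ
    rw [Finset.prod_add]
    refine Finset.sum_congr rfl fun t _ => ?_
    rw [Finset.prod_const_one, mul_one, Finset.prod_mul_distrib, Finset.prod_const]
  calc ∑ σ : U ⊕ W → Bool,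
        (1 + η) ^ (E.filter fun p => σ (Sum.inl p.1) = true ∧ σ (Sum.inr p.2) = true).card
          * (1 - η) ^ (E.card -
            (E.filter fun p => σ (Sum.inl p.1) = true ∧ σ (Sum.inr p.2) = true).card)
      = ∑ σ : U ⊕ W → Bool, ∑ t ∈ E.powerset, (-η) ^ t.card *
          ∏ q ∈ t, (if σ (Sum.inl q.1) = true ∧ σ (Sum.inr q.2) = true
            then (-1 : ℝ) else 1) :=
        Finset.sum_congr rfl fun σ _ => (stepA σ).trans (stepB σ)
    _ = ∑ t ∈ E.powerset, ∑ σ : U ⊕ W → Bool, (-η) ^ t.card *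
          ∏ q ∈ t, (if σ (Sum.inl q.1) = true ∧ σ (Sum.inr q.2) = true
            then (-1 : ℝ) else 1) := Finset.sum_comm
    _ = ∑ t ∈ E.powerset, (-η) ^ t.card *
          (2 ^ (Fintype.card U + Fintype.card W) * (1 / 2 : ℝ) ^ (bipMat t).rank) := by
        refine Finset.sum_congr rfl fun t _ => ?_
        rw [← Finset.mul_sum, char_sum]
    _ = 2 ^ (Fintype.card U + Fintype.card W) *
          ∑ S ∈ E.powerset, (1 / 2 : ℝ) ^ (bipMat S).rank * (-η) ^ S.card := by
        rw [Finset.mul_sum]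
        exact Finset.sum_congr rfl fun t _ => by ring
end

section
/- For any graph G on n vertices, linear-width(G) ≤ (tw(G)+1)·(⌊log₂ n⌋ + 1), where tw(G) is the tree-width of G. -/
/-- `G` has linear-width at most `ℓ`: there is a linear ordering of the edges of `G` such
that for every `i`, at most `ℓ` vertices are incident both to an edge appearing before
position `i` and to an edge at position `i` or later. -/
def LinearWidthLE {V : Type*} [Fintype V] (G : SimpleGraph V) (ℓ : ℕ) : Prop :=
  ∃ (m : ℕ) (e : Fin m ≃ G.edgeSet), ∀ i : Fin m,
    Nat.card {v : V // (∃ j, j < i ∧ v ∈ (e j : Sym2 V)) ∧ ∃ j, i ≤ j ∧ v ∈ (e j : Sym2 V)}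
      ≤ ℓ

/-- occurrences of `v` in the bag list form a contiguous block. -/
def IntervalProp {V : Type*} (v : V) (L : List (Finset V)) : Prop :=
  ∃ L1 L2 L3 : List (Finset V), L = L1 ++ L2 ++ L3 ∧ (∀ W ∈ L2, v ∈ W) ∧
    (∀ W ∈ L1, v ∉ W) ∧ (∀ W ∈ L3, v ∉ W)

lemma getD_mem_of_lt {α : Type*} (l : List α) (d : α) {n : ℕ} (h : n < l.length) :
    l.getD n d ∈ l := by
  rw [List.getD_eq_getElem _ _ h]; exact List.getElem_mem _

lemma IntervalProp.mem_getD {V : Type*} {v : V} {L : List (Finset V)}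
    (h : IntervalProp v L) {i j k : ℕ} (hij : i ≤ j) (hjk : j ≤ k)
    (hi : v ∈ L.getD i ∅) (hk : v ∈ L.getD k ∅) : v ∈ L.getD j ∅ := by
  obtain ⟨L1, L2, L3, rfl, h2, h1, h3⟩ := h
  have range : ∀ m : ℕ, v ∈ (L1 ++ L2 ++ L3).getD m ∅ →
      L1.length ≤ m ∧ m < L1.length + L2.length := by
    intro m hm
    rcases lt_or_ge m L1.length with hc | hc
    · rw [List.getD_append _ _ _ _ (by simp; omega), List.getD_append _ _ _ _ hc] at hm
      exact absurd hm (h1 _ (getD_mem_of_lt _ _ hc))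
    rcases lt_or_ge m (L1.length + L2.length) with hc2 | hc2
    · exact ⟨hc, hc2⟩
    exfalso
    rcases lt_or_ge m (L1.length + L2.length + L3.length) with hc3 | hc3
    · rw [List.getD_append_right _ _ _ _ (by simp; omega)] at hm
      exact h3 _ (getD_mem_of_lt _ _ (by simp; omega)) hm
    · rw [List.getD_eq_default _ _ (by simp; omega)] at hm
      exact Finset.notMem_empty v hm
  obtain ⟨hi1, _⟩ := range i hi
  obtain ⟨_, hk2⟩ := range k hk
  have hj1 : L1.length ≤ j := le_trans hi1 hij
  have hj2 : j < L1.length + L2.length := lt_of_le_of_lt hjk hk2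
  rw [List.getD_append _ _ _ _ (by simp; omega), List.getD_append_right _ _ _ _ hj1]
  exact h2 _ (getD_mem_of_lt _ _ (by omega))

open Finset in
/-- Conversion: a "path decomposition" given as a list of bags yields a linear-width bound. -/
lemma linearWidthLE_of_bags {V : Type*} [Fintype V] (G : SimpleGraph V)
    (L : List (Finset V)) (ℓ : ℕ)
    (hcard : ∀ W ∈ L, W.card ≤ ℓ)
    (hcov : ∀ u w : V, G.Adj u w → ∃ W ∈ L, u ∈ W ∧ w ∈ W)
    (hint : ∀ v : V, IntervalProp v L) :
    LinearWidthLE G ℓ := by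
  classical
  haveI : Fintype G.edgeSet := Fintype.ofFinite _
  set N := Fintype.card G.edgeSet with hN
  -- every edge has all its endpoints in some bag
  have hex : ∀ e : G.edgeSet, ∃ i : ℕ, ∀ x ∈ (e : Sym2 V), x ∈ L.getD i ∅ := by
    rintro ⟨e, he⟩
    induction e with
    | _ u w =>
      obtain ⟨W, hWL, hu, hw⟩ := hcov u w he
      obtain ⟨i, hilen, hiW⟩ := List.getElem_of_mem hWL
      refine ⟨i, ?_⟩
      intro x hx
      rw [List.getD_eq_getElem _ _ hilen, hiW]
      rcases Sym2.mem_iff.mp hx with rfl | rfl <;> assumption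
  let f : G.edgeSet → ℕ := fun e => Nat.find (hex e)
  have hf : ∀ (e : G.edgeSet), ∀ x ∈ (e : Sym2 V), x ∈ L.getD (f e) ∅ :=
    fun e => Nat.find_spec (hex e)
  let g0 : Fin N ≃ G.edgeSet := (Fintype.equivFin G.edgeSet).symm
  let σ : Equiv.Perm (Fin N) := Tuple.sort (f ∘ g0)
  let e : Fin N ≃ G.edgeSet := σ.trans g0
  have hmono : ∀ i j : Fin N, i ≤ j → f (e i) ≤ f (e j) := by
    intro i j hij
    exact Tuple.monotone_sort (f ∘ g0) hij
  refine ⟨N, e, ?_⟩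
  intro i
  set t := f (e i) with ht
  have hsub : {v : V | (∃ j, j < i ∧ v ∈ (e j : Sym2 V)) ∧ ∃ j, i ≤ j ∧ v ∈ (e j : Sym2 V)}
      ⊆ ↑(L.getD t ∅) := by
    rintro v ⟨⟨j, hji, hvj⟩, ⟨j', hij', hvj'⟩⟩
    have h1 : v ∈ L.getD (f (e j)) ∅ := hf (e j) v hvj
    have h2 : v ∈ L.getD (f (e j')) ∅ := hf (e j') v hvj'
    exact (hint v).mem_getD (hmono j i (le_of_lt hji)) (hmono i j' hij') h1 h2
  calc Nat.card {v : V // (∃ j, j < i ∧ v ∈ (e j : Sym2 V)) ∧ ∃ j, i ≤ j ∧ v ∈ (e j : Sym2 V)}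
      = ({v : V | (∃ j, j < i ∧ v ∈ (e j : Sym2 V)) ∧ ∃ j, i ≤ j ∧ v ∈ (e j : Sym2 V)} : Set V).ncard := (Nat.card_coe_set_eq _)
    _ ≤ (↑(L.getD t ∅) : Set V).ncard := Set.ncard_le_ncard hsub (Set.toFinite _)
    _ = (L.getD t ∅).card := Set.ncard_coe_finset _
    _ ≤ ℓ := by
        rcases lt_or_ge t L.length with hlt | hge
        · exact hcard _ (getD_mem_of_lt _ _ hlt)
        · rw [List.getD_eq_default _ _ hge]; simp

open Finset SimpleGraph in
lemma exists_bags {V ι : Type*} [Fintype V] [Fintype ι]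
    (G : SimpleGraph V) (T : SimpleGraph ι) (hT : T.IsTree) (bags : ι → Finset V) (k : ℕ)
    (hcover : ∀ v w : V, G.Adj v w → ∃ h : ι, v ∈ bags h ∧ w ∈ bags h)
    (hsubtree : ∀ v : V, ∀ t₁ t₃ : ι, v ∈ bags t₁ → v ∈ bags t₃ →
      ∀ p : T.Walk t₁ t₃, p.IsPath → ∀ t₂ ∈ p.support, v ∈ bags t₂)
    (hwidth : ∀ h : ι, (bags h).card ≤ k + 1) :
    ∀ (n : ℕ) (A : Finset V), A.card ≤ n →
    ∃ L : List (Finset V),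
      (∀ W ∈ L, W ⊆ A) ∧
      (∀ W ∈ L, W.card ≤ (k + 1) * (Nat.log 2 n + 1)) ∧
      (∀ v ∈ A, ∃ W ∈ L, v ∈ W) ∧
      (∀ u w : V, G.Adj u w → u ∈ A → w ∈ A → ∃ W ∈ L, u ∈ W ∧ w ∈ W) ∧
      (∀ v : V, IntervalProp v L) := by
  classical
  haveI : Nonempty ι := hT.isConnected.nonempty
  intro n
  induction n using Nat.strong_induction_on with
  | _ n ih =>
  intro A hA
  have hone : 1 ≤ (k + 1) * (Nat.log 2 n + 1) :=
    Nat.one_le_iff_ne_zero.mpr (by positivity)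
  rcases le_or_gt A.card 1 with hA1 | hA1
  · -- base cases
    rcases Nat.le_one_iff_eq_zero_or_eq_one.mp hA1 with h0 | h1
    · have hAe : A = ∅ := Finset.card_eq_zero.mp h0
      subst hAe
      exact ⟨[], by simp, by simp, by simp, by simp,
        fun v => ⟨[], [], [], by simp, by simp, by simp, by simp⟩⟩
    · obtain ⟨x, rfl⟩ := Finset.card_eq_one.mp h1
      refine ⟨[{x}], ?_, ?_, ?_, ?_, ?_⟩
      · intro W hW; rw [List.mem_singleton] at hW; subst hW; rfl
      · intro W hW; rw [List.mem_singleton] at hW; subst hW; simpa using hone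
      · intro v hv; exact ⟨{x}, List.mem_singleton_self _, hv⟩
      · intro u w huw hu hw
        rw [Finset.mem_singleton] at hu hw
        subst hu; subst hw
        exact absurd huw (G.irrefl)
      · intro v
        by_cases hvx : v ∈ ({x} : Finset V)
        · exact ⟨[], [{x}], [], by simp, by intro W hW; rw [List.mem_singleton] at hW; subst hW; exact hvx, by simp, by simp⟩
        · exact ⟨[{x}], [], [], by simp, by simp, by intro W hW; rw [List.mem_singleton] at hW; subst hW; exact hvx, by simp⟩
  -- main case
  have hn2 : 2 ≤ n := lt_of_lt_of_le hA1 hA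
  -- unique paths in the tree
  set P : ∀ a b : ι, T.Walk a b := fun a b => (hT.existsUnique_path a b).choose with hPdef
  have hP : ∀ a b : ι, (P a b).IsPath := fun a b => (hT.existsUnique_path a b).choose_spec.1
  have Puniq : ∀ (a b : ι) (q : T.Walk a b), q.IsPath → q = P a b :=
    fun a b q hq => (hT.existsUnique_path a b).choose_spec.2 q hq
  set A' : Finset V := A.filter (fun v => ∃ t, v ∈ bags t) with hA'def
  have hA'A : A' ⊆ A := Finset.filter_subset _ _
  let tv : V → ι := fun v => if h : ∃ t, v ∈ bags t then h.choose else Classical.arbitrary ι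
  have htv : ∀ (v : V), (∃ t, v ∈ bags t) → v ∈ bags (tv v) := by
    intro v h
    simp only [tv, dif_pos h]
    exact h.choose_spec
  set r : ι := Classical.arbitrary ι with hrdef
  -- centroid choice
  obtain ⟨c, hc⟩ : ∃ c : ι, A'.card ≤ n / 2 ∨
      ((n / 2 < (A'.filter (fun v => c ∈ (P r (tv v)).support)).card) ∧
       ∀ d : ι, (P r c).length < (P r d).length →
         (A'.filter (fun v => d ∈ (P r (tv v)).support)).card ≤ n / 2) := by
    by_cases hA'big : n / 2 < A'.card
    · set H : Finset ι := Finset.univ.filter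
        (fun t => n / 2 < (A'.filter (fun v => t ∈ (P r (tv v)).support)).card) with hHdef
      have hrH : r ∈ H := by
        rw [hHdef, Finset.mem_filter]
        refine ⟨Finset.mem_univ r, ?_⟩
        have : A'.filter (fun v => r ∈ (P r (tv v)).support) = A' :=
          Finset.filter_true_of_mem (fun v _ => Walk.start_mem_support _)
        rw [this]; exact hA'big
      obtain ⟨c, hcH, hmax⟩ := Finset.exists_max_image H (fun t => (P r t).length) ⟨r, hrH⟩
      refine ⟨c, Or.inr ⟨(Finset.mem_filter.mp hcH).2, fun d hd => ?_⟩⟩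
      by_contra hWd
      push_neg at hWd
      exact absurd (hmax d (Finset.mem_filter.2 ⟨Finset.mem_univ d, hWd⟩)) (not_le.2 hd)
    · exact ⟨r, Or.inl (le_of_not_gt hA'big)⟩
  set B : Finset V := bags c ∩ A with hBdef
  have hBcard : B.card ≤ k + 1 :=
    le_trans (Finset.card_le_card Finset.inter_subset_left) (hwidth c)
  have hBA : B ⊆ A := Finset.inter_subset_right
  -- connectivity within A avoiding bags c
  let conn : V → V → Prop := fun x y => ∃ p : G.Walk x y, ∀ z ∈ p.support, z ∈ A ∧ z ∉ bags c
  have hconn_refl : ∀ x, x ∈ A → x ∉ bags c → conn x x := by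
    intro x h1 h2
    exact ⟨Walk.nil, by intro z hz; rw [Walk.support_nil, List.mem_singleton] at hz; subst hz; exact ⟨h1, h2⟩⟩
  have hconn_symm : ∀ {x y}, conn x y → conn y x := by
    rintro x y ⟨p, hp⟩
    refine ⟨p.reverse, fun z hz => hp z ?_⟩
    rw [Walk.support_reverse] at hz
    exact List.mem_reverse.mp hz
  have hconn_trans : ∀ {x y z}, conn x y → conn y z → conn x z := by
    rintro x y z ⟨p, hp⟩ ⟨q, hq⟩
    refine ⟨p.append q, fun w hw => ?_⟩
    rcases (Walk.mem_support_append_iff _ _).mp hw with h | h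
    · exact hp w h
    · exact hq w h
  have hconn_mem : ∀ {x y}, conn x y → y ∈ A ∧ y ∉ bags c := by
    rintro x y ⟨p, hp⟩
    exact hp y p.end_mem_support
  set C : V → Finset V := fun x => A.filter (conn x) with hCdef
  have hCeq : ∀ {x y}, conn x y → C x = C y := by
    intro x y hxy
    ext z
    simp only [hCdef, Finset.mem_filter]
    exact ⟨fun ⟨h1, h2⟩ => ⟨h1, hconn_trans (hconn_symm hxy) h2⟩,
           fun ⟨h1, h2⟩ => ⟨h1, hconn_trans hxy h2⟩⟩
  set comps : Finset (Finset V) := (A \ B).image C with hcompsdef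
  -- RelT: connectivity in T avoiding c
  let RelT : ι → ι → Prop := fun a b => ∃ w : T.Walk a b, c ∉ w.support
  have relT_symm : ∀ {a b}, RelT a b → RelT b a := by
    rintro a b ⟨w, hw⟩
    refine ⟨w.reverse, fun hcm => hw ?_⟩
    rw [Walk.support_reverse] at hcm
    exact List.mem_reverse.mp hcm
  have relT_trans : ∀ {a b d}, RelT a b → RelT b d → RelT a d := by
    rintro a b d ⟨w1, h1⟩ ⟨w2, h2⟩
    refine ⟨w1.append w2, fun hcm => ?_⟩
    rcases (Walk.mem_support_append_iff _ _).mp hcm with h | h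
    · exact h1 h
    · exact h2 h
  have hPavoid : ∀ a b, RelT a b → c ∉ (P a b).support := by
    rintro a b ⟨w, hw⟩ hcm
    have h1 : (w.toPath : T.Walk a b) = P a b := Puniq a b _ w.toPath.2
    exact hw (Walk.support_toPath_subset w (h1 ▸ hcm))
  -- key: connected pieces of G avoiding bags c give RelT-related home bags
  have key : ∀ {u y : V} (p : G.Walk u y), (∀ z ∈ p.support, z ∈ A ∧ z ∉ bags c) →
      (∃ t, u ∈ bags t) → RelT (tv u) (tv y) := by
    intro u y p
    induction p with
    | nil =>
      intro hs hu
      refine ⟨Walk.nil, ?_⟩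
      rw [Walk.support_nil, List.mem_singleton]
      intro hceq
      exact (hs _ (Walk.start_mem_support _)).2 (hceq ▸ htv _ hu)
    | @cons u v w hadj q ihq =>
      intro hs hu
      obtain ⟨t0, hu0, hv0⟩ := hcover u v hadj
      have hunb : u ∉ bags c := (hs u (Walk.start_mem_support _)).2
      have hvnb : v ∉ bags c := by
        refine (hs v ?_).2
        rw [Walk.support_cons]
        exact List.mem_cons_of_mem _ (Walk.start_mem_support _)
      have h1 : RelT (tv u) t0 :=
        ⟨P (tv u) t0, fun hcm => hunb (hsubtree u (tv u) t0 (htv u hu) hu0 _ (hP _ _) c hcm)⟩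
      have h2 : RelT t0 (tv v) :=
        ⟨P t0 (tv v), fun hcm => hvnb (hsubtree v t0 (tv v) hv0 (htv v ⟨t0, hv0⟩) _ (hP _ _) c hcm)⟩
      have h3 : RelT (tv v) (tv w) := by
        refine ihq (fun z hz => hs z ?_) ⟨t0, hv0⟩
        rw [Walk.support_cons]
        exact List.mem_cons_of_mem _ hz
      exact relT_trans (relT_trans h1 h2) h3
  -- separator property: each component is small
  have hsep : ∀ x ∈ A \ B, (C x).card ≤ n / 2 := by
    intro x hx
    rcases le_or_gt (C x).card 1 with h1 | h1
    · omega
    have hxA : x ∈ A := (Finset.mem_sdiff.mp hx).1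
    have hxnb : x ∉ bags c := fun h => (Finset.mem_sdiff.mp hx).2 (Finset.mem_inter.2 ⟨h, hxA⟩)
    have hxCx : x ∈ C x := Finset.mem_filter.2 ⟨hxA, hconn_refl x hxA hxnb⟩
    have hA'sub : ∀ y ∈ C x, y ∈ A' ∧ y ∉ bags c := by
      intro y hy
      have hyA : y ∈ A := (Finset.mem_filter.mp hy).1
      have hconnxy : conn x y := (Finset.mem_filter.mp hy).2
      have hynb : y ∉ bags c := (hconn_mem hconnxy).2
      obtain ⟨z, hz, hzy⟩ := Finset.exists_mem_ne h1 y
      have hconnyz : conn y z :=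
        hconn_trans (hconn_symm hconnxy) (Finset.mem_filter.mp hz).2
      obtain ⟨p, hp⟩ := hconnyz
      obtain ⟨w2, hadj, q, rfl⟩ := Walk.exists_eq_cons_of_ne (Ne.symm hzy) p
      obtain ⟨t0, ht0, _⟩ := hcover y w2 hadj
      exact ⟨Finset.mem_filter.2 ⟨hyA, ⟨t0, ht0⟩⟩, hynb⟩
    have hxA' : x ∈ A' := (hA'sub x hxCx).1
    have hkey : ∀ y ∈ C x, RelT (tv x) (tv y) := by
      intro y hy
      obtain ⟨p, hp⟩ := (Finset.mem_filter.mp hy).2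
      exact key p hp (Finset.mem_filter.mp hxA').2
    rcases hc with hsmall | ⟨hheavy, hmax⟩
    · calc (C x).card ≤ A'.card := Finset.card_le_card (fun y hy => (hA'sub y hy).1)
        _ ≤ n / 2 := hsmall
    have hA'card : A'.card ≤ n := le_trans (Finset.card_le_card hA'A) hA
    by_cases hxr : RelT (tv x) r
    · have hsub : C x ⊆ A'.filter (fun v => ¬ c ∈ (P r (tv v)).support) := by
        intro y hy
        refine Finset.mem_filter.2 ⟨(hA'sub y hy).1, ?_⟩
        exact hPavoid _ _ (relT_symm (relT_trans (relT_symm (hkey y hy)) hxr))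
      have h2 := Finset.card_le_card hsub
      have h3 := Finset.card_filter_add_card_filter_not
        (s := A') (p := fun v => c ∈ (P r (tv v)).support)
      omega
    · have hcPx : c ∈ (P r (tv x)).support := by
        by_contra hcp
        exact hxr (relT_symm ⟨P r (tv x), hcp⟩)
      have htvxc : tv x ≠ c := by
        intro h
        exact hxnb (h ▸ htv x (Finset.mem_filter.mp hxA').2)
      obtain ⟨d, hadj, q, hq⟩ := Walk.exists_eq_cons_of_ne (Ne.symm htvxc) (P c (tv x))
      have hqprop : q.IsPath ∧ c ∉ q.support := by
        have := hP c (tv x)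
        rw [hq, Walk.cons_isPath_iff] at this
        exact ⟨this.1, this.2⟩
      have hRdx : RelT d (tv x) := ⟨q, hqprop.2⟩
      have hcPd : c ∈ (P r d).support := by
        by_contra hcp
        exact hxr (relT_symm (relT_trans ⟨P r d, hcp⟩ hRdx))
      have hdep : (P r c).length < (P r d).length := by
        have hsplit := Walk.take_spec (P r d) hcPd
        have htake : (P r d).takeUntil c hcPd = P r c :=
          Puniq r c _ ((hP r d).takeUntil hcPd)
        have hlen : ((P r d).takeUntil c hcPd).length + ((P r d).dropUntil c hcPd).length
            = (P r d).length := by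
          rw [← Walk.length_append, hsplit]
        have hdrop_pos : 0 < ((P r d).dropUntil c hcPd).length := by
          rcases Nat.eq_zero_or_pos ((P r d).dropUntil c hcPd).length with h0 | h0
          · exact absurd (Walk.eq_of_length_eq_zero h0) hadj.ne
          · exact h0
        have htl : ((P r d).takeUntil c hcPd).length = (P r c).length := by rw [htake]
        omega
      have hWd := hmax d hdep
      have hsub : C x ⊆ A'.filter (fun v => d ∈ (P r (tv v)).support) := by
        intro y hy
        have hyA' := (hA'sub y hy).1
        have hRdy : RelT d (tv y) := relT_trans hRdx (hkey y hy)
        have hxry : ¬ RelT (tv y) r := fun hyr => hxr (relT_trans (hkey y hy) hyr)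
        have hcPy : c ∈ (P r (tv y)).support := by
          by_contra hcp
          exact hxry (relT_symm ⟨P r (tv y), hcp⟩)
        obtain ⟨w, hw⟩ := hRdy
        have hwp : (w.toPath : T.Walk d (tv y)).IsPath := w.toPath.2
        have hwc : c ∉ (w.toPath : T.Walk d (tv y)).support :=
          fun hcm => hw (Walk.support_toPath_subset w hcm)
        have hconsp : (Walk.cons hadj (w.toPath : T.Walk d (tv y))).IsPath :=
          (Walk.cons_isPath_iff _ _).2 ⟨hwp, hwc⟩
        have hdrop : (P r (tv y)).dropUntil c hcPy
            = Walk.cons hadj (w.toPath : T.Walk d (tv y)) := by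
          have hd1 : (P r (tv y)).dropUntil c hcPy = P c (tv y) :=
            Puniq _ _ _ ((hP r (tv y)).dropUntil hcPy)
          have hd2 : Walk.cons hadj (w.toPath : T.Walk d (tv y)) = P c (tv y) :=
            Puniq _ _ _ hconsp
          rw [hd1, hd2]
        have hdmem : d ∈ ((P r (tv y)).dropUntil c hcPy).support := by
          rw [hdrop, Walk.support_cons]
          exact List.mem_cons_of_mem _ (Walk.start_mem_support _)
        exact Finset.mem_filter.2 ⟨hyA', Walk.support_dropUntil_subset _ hcPy hdmem⟩
      calc (C x).card ≤ (A'.filter (fun v => d ∈ (P r (tv v)).support)).card :=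
            Finset.card_le_card hsub
        _ ≤ n / 2 := hWd

  -- apply the induction hypothesis to each component
  have hn2' : n / 2 < n := by omega
  have hlog : Nat.log 2 (n / 2) + 1 = Nat.log 2 n := by
    have h1 : Nat.log 2 (n / 2) = Nat.log 2 n - 1 := Nat.log_div_base 2 n
    have h2 : 0 < Nat.log 2 n := Nat.log_pos one_lt_two hn2
    omega
  have harith : (k + 1) * (Nat.log 2 (n / 2) + 1) + (k + 1) = (k + 1) * (Nat.log 2 n + 1) := by
    rw [← hlog]; ring
  have hcompsub : ∀ D ∈ comps, D ⊆ A := by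
    intro D hD
    obtain ⟨x, _, rfl⟩ := Finset.mem_image.mp hD
    exact Finset.filter_subset _ _
  have hLD : ∀ D ∈ comps, ∃ L : List (Finset V),
      (∀ W ∈ L, W ⊆ D) ∧
      (∀ W ∈ L, W.card ≤ (k + 1) * (Nat.log 2 (n / 2) + 1)) ∧
      (∀ v ∈ D, ∃ W ∈ L, v ∈ W) ∧
      (∀ u w : V, G.Adj u w → u ∈ D → w ∈ D → ∃ W ∈ L, u ∈ W ∧ w ∈ W) ∧
      (∀ v : V, IntervalProp v L) := by
    intro D hD
    obtain ⟨x, hx, rfl⟩ := Finset.mem_image.mp hD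
    exact ih (n / 2) hn2' (C x) (hsep x hx)
  let LD : Finset V → List (Finset V) := fun D => if h : D ∈ comps then (hLD D h).choose else []
  have hLDspec : ∀ (D : Finset V) (h : D ∈ comps),
      (∀ W ∈ LD D, W ⊆ D) ∧
      (∀ W ∈ LD D, W.card ≤ (k + 1) * (Nat.log 2 (n / 2) + 1)) ∧
      (∀ v ∈ D, ∃ W ∈ LD D, v ∈ W) ∧
      (∀ u w : V, G.Adj u w → u ∈ D → w ∈ D → ∃ W ∈ LD D, u ∈ W ∧ w ∈ W) ∧
      (∀ v : V, IntervalProp v (LD D)) := by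
    intro D h
    simp only [LD, dif_pos h]
    exact (hLD D h).choose_spec
  let blockOf : Finset V → List (Finset V) := fun D => (LD D).map (· ∪ B)
  set L : List (Finset V) := B :: (comps.toList.map blockOf).flatten with hLdef
  have hmemL : ∀ W ∈ L, W = B ∨ ∃ D, ∃ _ : D ∈ comps, ∃ W' ∈ LD D, W = W' ∪ B := by
    intro W hW
    rcases List.mem_cons.mp hW with h | h
    · exact Or.inl h
    · right
      obtain ⟨bl, hbl, hWbl⟩ := List.mem_flatten.mp h
      obtain ⟨D, hDl, rfl⟩ := List.mem_map.mp hbl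
      obtain ⟨W', hW', rfl⟩ := List.mem_map.mp hWbl
      exact ⟨D, Finset.mem_toList.mp hDl, W', hW', rfl⟩
  have hblockmem : ∀ (D : Finset V), D ∈ comps → ∀ W' ∈ LD D, W' ∪ B ∈ L := by
    intro D hD W' hW'
    refine List.mem_cons_of_mem _ (List.mem_flatten.mpr ⟨blockOf D, ?_, ?_⟩)
    · exact List.mem_map_of_mem (Finset.mem_toList.mpr hD)
    · exact List.mem_map_of_mem hW'
  have hsubA : ∀ W ∈ L, W ⊆ A := by
    intro W hW
    rcases hmemL W hW with rfl | ⟨D, hD, W', hW', rfl⟩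
    · exact hBA
    · exact Finset.union_subset (subset_trans ((hLDspec D hD).1 W' hW') (hcompsub D hD)) hBA
  have hCmem : ∀ v ∈ A, v ∉ B → v ∈ C v := by
    intro v hv hvB
    exact Finset.mem_filter.2 ⟨hv, hconn_refl v hv (fun h => hvB (Finset.mem_inter.2 ⟨h, hv⟩))⟩
  have hCcomps : ∀ v ∈ A, v ∉ B → C v ∈ comps := by
    intro v hv hvB
    exact Finset.mem_image_of_mem C (Finset.mem_sdiff.2 ⟨hv, hvB⟩)
  refine ⟨L, hsubA, ?_, ?_, ?_, ?_⟩
  · -- cardinality bound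
    intro W hW
    rcases hmemL W hW with rfl | ⟨D, hD, W', hW', rfl⟩
    · calc B.card ≤ k + 1 := hBcard
        _ = (k + 1) * 1 := (mul_one _).symm
        _ ≤ (k + 1) * (Nat.log 2 n + 1) := Nat.mul_le_mul_left _ (by omega)
    · calc (W' ∪ B).card ≤ W'.card + B.card := Finset.card_union_le _ _
        _ ≤ (k + 1) * (Nat.log 2 (n / 2) + 1) + (k + 1) :=
            Nat.add_le_add ((hLDspec D hD).2.1 W' hW') hBcard
        _ = (k + 1) * (Nat.log 2 n + 1) := harith
  · -- vertex cover
    intro v hv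
    by_cases hvB : v ∈ B
    · exact ⟨B, List.mem_cons_self, hvB⟩
    · obtain ⟨W', hW', hvW'⟩ := (hLDspec (C v) (hCcomps v hv hvB)).2.2.1 v (hCmem v hv hvB)
      exact ⟨W' ∪ B, hblockmem _ (hCcomps v hv hvB) W' hW', Finset.mem_union_left _ hvW'⟩
  · -- edge cover
    intro u w huw hu hw
    by_cases hub : u ∈ bags c <;> by_cases hwb : w ∈ bags c
    · exact ⟨B, List.mem_cons_self, Finset.mem_inter.2 ⟨hub, hu⟩, Finset.mem_inter.2 ⟨hwb, hw⟩⟩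
    · -- u ∈ bags c, w ∉ bags c
      have hwB : w ∉ B := fun h => hwb (Finset.mem_inter.mp h).1
      obtain ⟨W', hW', hvW'⟩ := (hLDspec (C w) (hCcomps w hw hwB)).2.2.1 w (hCmem w hw hwB)
      exact ⟨W' ∪ B, hblockmem _ (hCcomps w hw hwB) W' hW',
        Finset.mem_union_right _ (Finset.mem_inter.2 ⟨hub, hu⟩), Finset.mem_union_left _ hvW'⟩
    · -- u ∉ bags c, w ∈ bags c
      have huB : u ∉ B := fun h => hub (Finset.mem_inter.mp h).1
      obtain ⟨W', hW', hvW'⟩ := (hLDspec (C u) (hCcomps u hu huB)).2.2.1 u (hCmem u hu huB)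
      exact ⟨W' ∪ B, hblockmem _ (hCcomps u hu huB) W' hW',
        Finset.mem_union_left _ hvW', Finset.mem_union_right _ (Finset.mem_inter.2 ⟨hwb, hw⟩)⟩
    · -- neither endpoint in bags c
      have huB : u ∉ B := fun h => hub (Finset.mem_inter.mp h).1
      have hconnuw : conn u w := by
        refine ⟨Walk.cons huw Walk.nil, ?_⟩
        intro z hz
        rw [Walk.support_cons, Walk.support_nil] at hz
        rcases List.mem_cons.mp hz with rfl | hz'
        · exact ⟨hu, hub⟩
        · rw [List.mem_singleton] at hz'
          subst hz'
          exact ⟨hw, hwb⟩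
      have hwCu : w ∈ C u := Finset.mem_filter.2 ⟨hw, hconnuw⟩
      obtain ⟨W', hW', h1, h2⟩ := (hLDspec (C u) (hCcomps u hu huB)).2.2.2.1 u w huw
        (hCmem u hu huB) hwCu
      exact ⟨W' ∪ B, hblockmem _ (hCcomps u hu huB) W' hW',
        Finset.mem_union_left _ h1, Finset.mem_union_left _ h2⟩
  · -- interval property
    intro v
    by_cases hvB : v ∈ B
    · refine ⟨[], L, [], by simp, ?_, by simp, by simp⟩
      intro W hW
      rcases hmemL W hW with rfl | ⟨D, hD, W', hW', rfl⟩
      · exact hvB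
      · exact Finset.mem_union_right _ hvB
    by_cases hvA : v ∈ A
    · -- v lies in a unique component
      have hvCv : v ∈ C v := hCmem v hvA hvB
      have hCvcomps : C v ∈ comps := hCcomps v hvA hvB
      have hvD' : ∀ D' ∈ comps, D' ≠ C v → v ∉ D' := by
        intro D' hD' hne hvD'
        obtain ⟨x', _, rfl⟩ := Finset.mem_image.mp hD'
        exact hne (hCeq (Finset.mem_filter.mp hvD').2)
      obtain ⟨s, t, hsplit⟩ := List.append_of_mem (Finset.mem_toList.mpr hCvcomps)
      have hnd : (s ++ C v :: t).Nodup := hsplit ▸ comps.nodup_toList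
      have hCvs : C v ∉ s := by
        intro h
        exact ((List.nodup_append.mp hnd).2.2 _ h _ List.mem_cons_self) rfl
      have hCvt : C v ∉ t := (List.nodup_cons.mp (List.nodup_append.mp hnd).2.1).1
      obtain ⟨l1, l2, l3, hl123, hl2, hl1, hl3⟩ := (hLDspec (C v) hCvcomps).2.2.2.2 v
      refine ⟨B :: ((s.map blockOf).flatten ++ l1.map (· ∪ B)), l2.map (· ∪ B),
        l3.map (· ∪ B) ++ (t.map blockOf).flatten, ?_, ?_, ?_, ?_⟩
      · rw [hLdef, hsplit]
        have : blockOf (C v) = l1.map (· ∪ B) ++ l2.map (· ∪ B) ++ l3.map (· ∪ B) := by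
          show (LD (C v)).map (· ∪ B) = _
          rw [hl123, List.map_append, List.map_append]
        simp only [List.map_append, List.map_cons, List.flatten_append, List.flatten_cons, this]
        simp [List.append_assoc]
      · intro W hW
        obtain ⟨W', hW', rfl⟩ := List.mem_map.mp hW
        exact Finset.mem_union_left _ (hl2 W' hW')
      · intro W hW
        rcases List.mem_cons.mp hW with rfl | hW'
        · exact hvB
        rcases List.mem_append.mp hW' with h | h
        · obtain ⟨bl, hbl, hWbl⟩ := List.mem_flatten.mp h
          obtain ⟨D', hD's, rfl⟩ := List.mem_map.mp hbl
          obtain ⟨W2, hW2, rfl⟩ := List.mem_map.mp hWbl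
          have hD'comps : D' ∈ comps := Finset.mem_toList.mp
            (by rw [hsplit]; exact List.mem_append_left _ hD's)
          have hne : D' ≠ C v := fun h => hCvs (h ▸ hD's)
          intro hvW
          rcases Finset.mem_union.mp hvW with h1 | h1
          · exact hvD' D' hD'comps hne ((hLDspec D' hD'comps).1 W2 hW2 h1)
          · exact hvB h1
        · obtain ⟨W2, hW2, rfl⟩ := List.mem_map.mp h
          intro hvW
          rcases Finset.mem_union.mp hvW with h1 | h1
          · exact hl1 W2 hW2 h1
          · exact hvB h1
      · intro W hW
        rcases List.mem_append.mp hW with h | h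
        · obtain ⟨W2, hW2, rfl⟩ := List.mem_map.mp h
          intro hvW
          rcases Finset.mem_union.mp hvW with h1 | h1
          · exact hl3 W2 hW2 h1
          · exact hvB h1
        · obtain ⟨bl, hbl, hWbl⟩ := List.mem_flatten.mp h
          obtain ⟨D', hD't, rfl⟩ := List.mem_map.mp hbl
          obtain ⟨W2, hW2, rfl⟩ := List.mem_map.mp hWbl
          have hD'comps : D' ∈ comps := Finset.mem_toList.mp
            (by rw [hsplit]; exact List.mem_append_right _ (List.mem_cons_of_mem _ hD't))
          have hne : D' ≠ C v := fun h => hCvt (h ▸ hD't)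
          intro hvW
          rcases Finset.mem_union.mp hvW with h1 | h1
          · exact hvD' D' hD'comps hne ((hLDspec D' hD'comps).1 W2 hW2 h1)
          · exact hvB h1
    · -- v ∉ A : v occurs in no bag
      refine ⟨L, [], [], by simp, by simp, ?_, by simp⟩
      intro W hW hvW
      exact hvA (hsubA W hW hvW)

/-- For any graph `G` on `n` vertices, if `G` has a tree decomposition of width at most `k`
(bags of size at most `k+1`), then `linear-width(G) ≤ (k+1)·(⌊log₂ n⌋ + 1)`.  In
particular `linear-width(G) ≤ (tw(G)+1)·(⌊log₂ n⌋ + 1)`. -/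
theorem linearWidth_le_treewidth {V ι : Type*} [Fintype V] [Fintype ι]
    (G : SimpleGraph V) (T : SimpleGraph ι) (hT : T.IsTree) (bags : ι → Finset V) (k : ℕ)
    (hcover : ∀ v w : V, G.Adj v w → ∃ h : ι, v ∈ bags h ∧ w ∈ bags h)
    (hsubtree : ∀ v : V, ∀ t₁ t₃ : ι, v ∈ bags t₁ → v ∈ bags t₃ →
      ∀ p : T.Walk t₁ t₃, p.IsPath → ∀ t₂ ∈ p.support, v ∈ bags t₂)
    (hwidth : ∀ h : ι, (bags h).card ≤ k + 1) :
    LinearWidthLE G ((k + 1) * (Nat.log 2 (Fintype.card V) + 1)) := by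
  obtain ⟨L, hsub, hcard, hvert, hedge, hint⟩ :=
    exists_bags G T hT bags k hcover hsubtree hwidth (Fintype.card V) Finset.univ
      (by simp [Finset.card_univ])
  exact linearWidthLE_of_bags G L _ hcard
    (fun u w h => hedge u w h (Finset.mem_univ u) (Finset.mem_univ w)) hint
end

section
/- Let G = (U ∪ W, E) be a bipartite graph with t isolated vertices. Then Σ_{S ⊆ E} (1/2)^{rk_2(S)} (−1)^{|S|} = 2^{|E| − |U| − |W| + t}, i.e., R'_2(G; 1/2, −1) = 2^{|E|−|V|+t}. -/
open Finset Matrix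

namespace RankSumAux

/-- The sign character on `ZMod 2`. -/
def χ (a : ZMod 2) : ℝ := if a = 1 then -1 else 1

lemma zmod_cases (a : ZMod 2) : a = 0 ∨ a = 1 := by revert a; decide

lemma χ_zero : χ 0 = 1 := by simp [χ]

lemma χ_one : χ 1 = -1 := by simp [χ]

lemma zero_ne_one' : (0 : ZMod 2) ≠ 1 := by decide

lemma one_add_one' : (1 : ZMod 2) + 1 = 0 := by decide

lemma χ_add (a b : ZMod 2) : χ (a + b) = χ a * χ b := by
  rcases zmod_cases a with ha | ha <;> rcases zmod_cases b with hb | hb <;>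
    subst ha <;> subst hb <;>
    simp only [zero_add, add_zero, one_add_one', χ_zero, χ_one] <;> norm_num

lemma χ_sum {ι : Type*} (s : Finset ι) (f : ι → ZMod 2) :
    χ (∑ i ∈ s, f i) = ∏ i ∈ s, χ (f i) := by
  classical
  induction s using Finset.induction_on with
  | empty => simpa using χ_zero
  | insert _ _ h ih =>
    rw [Finset.sum_insert h, Finset.prod_insert h, χ_add, ih]

lemma sum_zmod (f : ZMod 2 → ℝ) : ∑ b : ZMod 2, f b = f 0 + f 1 := by
  rw [show (Finset.univ : Finset (ZMod 2)) = {0, 1} from by decide,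
    Finset.sum_insert (by decide), Finset.sum_singleton]

lemma one_sub_χ_mul (a b : ZMod 2) :
    1 - χ (a * b) = 2 * (if a = 1 then (1:ℝ) else 0) * (if b = 1 then (1:ℝ) else 0) := by
  rcases zmod_cases a with ha | ha <;> rcases zmod_cases b with hb | hb <;>
    subst ha <;> subst hb <;>
    simp only [zero_mul, mul_zero, mul_one, χ_zero, χ_one, if_pos rfl,
      if_neg zero_ne_one'] <;> norm_num

/-- Character sum over all vectors: detects the zero vector. -/
lemma sum_χ_dot {α : Type*} [Fintype α] [DecidableEq α] (v : α → ZMod 2) :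
    ∑ x : α → ZMod 2, χ (x ⬝ᵥ v) = if v = 0 then (2:ℝ) ^ Fintype.card α else 0 := by
  classical
  have h1 : ∀ x : α → ZMod 2, χ (x ⬝ᵥ v) = ∏ a, χ (x a * v a) := fun x => by
    rw [show x ⬝ᵥ v = ∑ a, x a * v a from rfl, χ_sum]
  simp only [h1]
  rw [← Fintype.piFinset_univ,
    ← Finset.prod_univ_sum (fun _ => (Finset.univ : Finset (ZMod 2)))
      (fun a b => χ (b * v a))]
  have h2 : ∀ a, (∑ b : ZMod 2, χ (b * v a)) = if v a = 0 then (2:ℝ) else 0 := by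
    intro a
    rcases zmod_cases (v a) with h | h <;> rw [h] <;> rw [sum_zmod] <;> norm_num [χ]
  simp only [h2]
  by_cases hv : v = 0
  · subst hv
    rw [if_pos rfl]
    simp [Finset.prod_const]
  · obtain ⟨a, ha⟩ : ∃ a, v a ≠ 0 := by
      by_contra h; push_neg at h; exact hv (funext h)
    rw [if_neg hv]
    exact Finset.prod_eq_zero (Finset.mem_univ a) (by rw [if_neg ha])

/-- Counting the kernel of a matrix over `F_2`. -/
lemma card_ker {U W : Type*} [Fintype U] [Fintype W] [DecidableEq U] [DecidableEq W]
    (M : Matrix U W (ZMod 2)) :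
    (Finset.univ.filter fun y : W → ZMod 2 => M.mulVec y = 0).card
      = 2 ^ (Fintype.card W - M.rank) := by
  classical
  have h1 : (Finset.univ.filter fun y : W → ZMod 2 => M.mulVec y = 0).card
      = Fintype.card {y : W → ZMod 2 // M.mulVec y = 0} := (Fintype.card_subtype _).symm
  haveI : Fintype ↥(LinearMap.ker M.mulVecLin) := Fintype.ofFinite _
  have h2 : Fintype.card {y : W → ZMod 2 // M.mulVec y = 0}
      = Fintype.card ↥(LinearMap.ker M.mulVecLin) := by
    apply Fintype.card_congr
    exact Equiv.subtypeEquivRight fun y => by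
      simp [LinearMap.mem_ker, Matrix.mulVecLin_apply]
  have h3 : Fintype.card ↥(LinearMap.ker M.mulVecLin)
      = 2 ^ Module.finrank (ZMod 2) ↥(LinearMap.ker M.mulVecLin) := by
    rw [Module.card_eq_pow_finrank (K := ZMod 2), ZMod.card]
  have h4 : M.rank + Module.finrank (ZMod 2) ↥(LinearMap.ker M.mulVecLin)
      = Fintype.card W := by
    have := LinearMap.finrank_range_add_finrank_ker M.mulVecLin
    rwa [Module.finrank_fintype_fun_eq_card] at this
  have h5 : Module.finrank (ZMod 2) ↥(LinearMap.ker M.mulVecLin)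
      = Fintype.card W - M.rank := by omega
  rw [h1, h2, h3, h5]

/-- The double character sum computes `2^{-rank}`. -/
lemma char_sum_rank {U W : Type*} [Fintype U] [Fintype W] [DecidableEq U] [DecidableEq W]
    (M : Matrix U W (ZMod 2)) :
    ∑ x : U → ZMod 2, ∑ y : W → ZMod 2, χ (x ⬝ᵥ M.mulVec y)
      = (2:ℝ) ^ (Fintype.card U + Fintype.card W) * (1 / 2 : ℝ) ^ M.rank := by
  classical
  rw [Finset.sum_comm]
  have h1 : ∀ y : W → ZMod 2, (∑ x : U → ZMod 2, χ (x ⬝ᵥ M.mulVec y))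
      = if M.mulVec y = 0 then (2:ℝ) ^ Fintype.card U else 0 := fun y => sum_χ_dot _
  simp only [h1]
  rw [Finset.sum_ite, Finset.sum_const, Finset.sum_const_zero, add_zero, card_ker,
    nsmul_eq_mul]
  have hle : M.rank ≤ Fintype.card W := M.rank_le_card_width
  have : ((2:ℝ) ^ (Fintype.card W - M.rank)) = 2 ^ Fintype.card W * (2 ^ M.rank)⁻¹ :=
    pow_sub₀ (2:ℝ) two_ne_zero hle
  push_cast
  rw [this, one_div, inv_pow, pow_add]
  ring

/-- One-sided counting: the number of 0/1-labelings which are 1 on all covered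
vertices is `2^(number of uncovered vertices)`. -/
lemma count_side {α : Type*} [Fintype α] [DecidableEq α] (c : α → Prop) [DecidablePred c] :
    ∑ x : α → ZMod 2, (if ∀ a, c a → x a = 1 then (1:ℝ) else 0)
      = 2 ^ Nat.card {a : α // ¬ c a} := by
  classical
  have h1 : ∀ x : α → ZMod 2, (if ∀ a, c a → x a = 1 then (1:ℝ) else 0)
      = ∏ a, (if c a then (if x a = 1 then (1:ℝ) else 0) else 1) := by
    intro x
    by_cases h : ∀ a, c a → x a = 1
    · rw [if_pos h]
      refine (Finset.prod_eq_one fun a _ => ?_).symm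
      by_cases hc : c a
      · rw [if_pos hc, if_pos (h a hc)]
      · rw [if_neg hc]
    · rw [if_neg h]
      push_neg at h
      obtain ⟨a, hca, hxa⟩ := h
      refine (Finset.prod_eq_zero (Finset.mem_univ a) ?_).symm
      rw [if_pos hca, if_neg hxa]
  simp only [h1]
  rw [← Fintype.piFinset_univ,
    ← Finset.prod_univ_sum (fun _ => (Finset.univ : Finset (ZMod 2)))
      (fun a b => if c a then (if b = 1 then (1:ℝ) else 0) else 1)]
  have h2 : ∀ a, (∑ b : ZMod 2, (if c a then (if b = 1 then (1:ℝ) else 0) else 1))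
      = if c a then 1 else 2 := by
    intro a
    by_cases hc : c a <;> simp [hc, sum_zmod] <;> norm_num
  simp only [h2]
  rw [Finset.prod_ite, Finset.prod_const, Finset.prod_const, one_pow, one_mul,
    Nat.card_eq_fintype_card, Fintype.card_subtype]

end RankSumAux

open RankSumAux in
/-- For a bipartite graph `G = (U ∪ W, E)` with `t` isolated vertices,
`Σ_{S ⊆ E} (1/2)^{rk_2(S)} (−1)^{|S|} = 2^{|E| − |U| − |W| + t}`, i.e.
`R'₂(G; 1/2, −1) = 2^{|E| − |V| + t}`. -/
theorem rank_sum_at_half_neg_one {U W : Type*} [Fintype U] [Fintype W]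
    [DecidableEq U] [DecidableEq W] (E : Finset (U × W)) :
    ∑ S ∈ E.powerset, (1 / 2 : ℝ) ^ (bipMat S).rank * (-1 : ℝ) ^ S.card
      = (2 : ℝ) ^ ((E.card : ℤ) - Fintype.card U - Fintype.card W +
          Nat.card {x : U ⊕ W // ∀ p ∈ E, Sum.inl p.1 ≠ x ∧ Sum.inr p.2 ≠ x}) := by
  classical
  set tU := Nat.card {u : U // ¬ ∃ p ∈ E, p.1 = u} with htU
  set tW := Nat.card {w : W // ¬ ∃ p ∈ E, p.2 = w} with htW
  -- Step 1: the dot product through a bipartite matrix is a sum over edges.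
  have hdot : ∀ (S : Finset (U × W)) (x : U → ZMod 2) (y : W → ZMod 2),
      x ⬝ᵥ (bipMat S).mulVec y = ∑ p ∈ S, x p.1 * y p.2 := by
    intro S x y
    have : x ⬝ᵥ (bipMat S).mulVec y
        = ∑ u, ∑ w, (if (u, w) ∈ S then x u * y w else 0) := by
      simp only [dotProduct, Matrix.mulVec, bipMat, Matrix.of_apply,
        Finset.mul_sum]
      refine Finset.sum_congr rfl fun u _ => Finset.sum_congr rfl fun w _ => ?_
      by_cases h : (u, w) ∈ S <;> simp [h]
    rw [this, ← Finset.sum_product']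
    rw [show ((Finset.univ : Finset U) ×ˢ (Finset.univ : Finset W))
      = (Finset.univ : Finset (U × W)) from Finset.univ_product_univ]
    rw [Finset.sum_ite_mem, Finset.univ_inter]
  -- Step 2: multiply the LHS by 2^(|U|+|W|) and express it as a big character sum.
  have key : (2:ℝ) ^ (Fintype.card U + Fintype.card W) *
      (∑ S ∈ E.powerset, (1 / 2 : ℝ) ^ (bipMat S).rank * (-1 : ℝ) ^ S.card)
      = (2:ℝ) ^ (E.card + (tU + tW)) := by
    rw [Finset.mul_sum]
    have h1 : ∀ S ∈ E.powerset,
        (2:ℝ) ^ (Fintype.card U + Fintype.card W) *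
          ((1 / 2 : ℝ) ^ (bipMat S).rank * (-1 : ℝ) ^ S.card)
        = ∑ x : U → ZMod 2, ∑ y : W → ZMod 2,
            ∏ p ∈ S, (- χ (x p.1 * y p.2)) := by
      intro S _
      rw [← mul_assoc, ← char_sum_rank (bipMat S)]
      rw [Finset.sum_mul]
      refine Finset.sum_congr rfl fun x _ => ?_
      rw [Finset.sum_mul]
      refine Finset.sum_congr rfl fun y _ => ?_
      rw [hdot, χ_sum, show ((-1:ℝ)) ^ S.card = ∏ _p ∈ S, (-1:ℝ) from by
        rw [Finset.prod_const], ← Finset.prod_mul_distrib]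
      refine Finset.prod_congr rfl fun p _ => by ring
    rw [Finset.sum_congr rfl h1, Finset.sum_comm]
    have h2 : ∀ x : U → ZMod 2,
        (∑ S ∈ E.powerset, ∑ y : W → ZMod 2, ∏ p ∈ S, (- χ (x p.1 * y p.2)))
        = ∑ y : W → ZMod 2, ∑ S ∈ E.powerset, ∏ p ∈ S, (- χ (x p.1 * y p.2)) :=
      fun x => Finset.sum_comm
    rw [Finset.sum_congr rfl fun x _ => h2 x]
    -- now collapse the powerset sum into a product over E
    have h3 : ∀ (x : U → ZMod 2) (y : W → ZMod 2),
        (∑ S ∈ E.powerset, ∏ p ∈ S, (- χ (x p.1 * y p.2)))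
        = ∏ p ∈ E, (1 - χ (x p.1 * y p.2)) := by
      intro x y
      have := Finset.prod_add (fun p : U × W => - χ (x p.1 * y p.2))
        (fun _ => (1:ℝ)) E
      simp only [Finset.prod_const_one, mul_one] at this
      rw [← this]
      refine Finset.prod_congr rfl fun p _ => by ring
    rw [Finset.sum_congr rfl fun x _ =>
      Finset.sum_congr rfl fun y _ => h3 x y]
    -- factor each term
    have h4 : ∀ (x : U → ZMod 2) (y : W → ZMod 2),
        (∏ p ∈ E, (1 - χ (x p.1 * y p.2)))
        = 2 ^ E.card * ((if ∀ u, (∃ p ∈ E, p.1 = u) → x u = 1 then (1:ℝ) else 0) *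
            (if ∀ w, (∃ p ∈ E, p.2 = w) → y w = 1 then (1:ℝ) else 0)) := by
      intro x y
      have : ∀ p ∈ E, (1 - χ (x p.1 * y p.2))
          = 2 * (if x p.1 = 1 then (1:ℝ) else 0) * (if y p.2 = 1 then (1:ℝ) else 0) :=
        fun p _ => one_sub_χ_mul _ _
      rw [Finset.prod_congr rfl this]
      rw [Finset.prod_mul_distrib, Finset.prod_mul_distrib, Finset.prod_const]
      have hA : (∏ p ∈ E, (if x p.1 = 1 then (1:ℝ) else 0))
          = (if ∀ u, (∃ p ∈ E, p.1 = u) → x u = 1 then (1:ℝ) else 0) := by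
        by_cases h : ∀ u, (∃ p ∈ E, p.1 = u) → x u = 1
        · rw [if_pos h]
          exact Finset.prod_eq_one fun p hp => by
            rw [if_pos (h p.1 ⟨p, hp, rfl⟩)]
        · rw [if_neg h]
          push_neg at h
          obtain ⟨u, ⟨p, hp, hpu⟩, hxu⟩ := h
          exact Finset.prod_eq_zero hp (by rw [hpu, if_neg hxu])
      have hB : (∏ p ∈ E, (if y p.2 = 1 then (1:ℝ) else 0))
          = (if ∀ w, (∃ p ∈ E, p.2 = w) → y w = 1 then (1:ℝ) else 0) := by
        by_cases h : ∀ w, (∃ p ∈ E, p.2 = w) → y w = 1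
        · rw [if_pos h]
          exact Finset.prod_eq_one fun p hp => by
            rw [if_pos (h p.2 ⟨p, hp, rfl⟩)]
        · rw [if_neg h]
          push_neg at h
          obtain ⟨w, ⟨p, hp, hpw⟩, hyw⟩ := h
          exact Finset.prod_eq_zero hp (by rw [hpw, if_neg hyw])
      rw [hA, hB]
      ring
    rw [Finset.sum_congr rfl fun x _ =>
      Finset.sum_congr rfl fun y _ => h4 x y]
    simp only [← Finset.mul_sum, ← Finset.sum_mul]
    rw [count_side (fun u : U => ∃ p ∈ E, p.1 = u),
      count_side (fun w : W => ∃ p ∈ E, p.2 = w)]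
    rw [← htU, ← htW, pow_add, pow_add]
  -- Step 3: identify t with tU + tW.
  have ht : Nat.card {x : U ⊕ W // ∀ p ∈ E, Sum.inl p.1 ≠ x ∧ Sum.inr p.2 ≠ x}
      = tU + tW := by
    rw [htU, htW]
    rw [Nat.card_congr
      (Equiv.subtypeSum (p := fun x : U ⊕ W => ∀ p ∈ E, Sum.inl p.1 ≠ x ∧ Sum.inr p.2 ≠ x)),
      Nat.card_sum]
    congr 1
    · exact Nat.card_congr (Equiv.subtypeEquivRight fun u => by
        constructor
        · intro h ⟨p, hp, hpu⟩
          exact (h p hp).1 (by rw [hpu])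
        · intro h p hp
          refine ⟨fun hc => h ⟨p, hp, Sum.inl.inj hc⟩, fun hc => by simp at hc⟩)
    · exact Nat.card_congr (Equiv.subtypeEquivRight fun w => by
        constructor
        · intro h ⟨p, hp, hpw⟩
          exact (h p hp).2 (by rw [hpw])
        · intro h p hp
          refine ⟨fun hc => by simp at hc, fun hc => h ⟨p, hp, Sum.inr.inj hc⟩⟩)
  rw [ht]
  -- Step 4: conclude by zpow arithmetic.
  have h2 : ((2:ℝ) ^ (Fintype.card U + Fintype.card W)) ≠ 0 := by positivity
  rw [show ((E.card : ℤ) - Fintype.card U - Fintype.card W + ((tU + tW : ℕ) : ℤ))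
      = ((E.card + (tU + tW) : ℕ) : ℤ) - ((Fintype.card U + Fintype.card W : ℕ) : ℤ) from by
    push_cast; ring]
  rw [zpow_sub₀ (by norm_num : (2:ℝ) ≠ 0), zpow_natCast, zpow_natCast]
  rw [eq_div_iff h2, mul_comm]
  exact key
end

section
/- Let G=(V,E) be a graph, fix an ordering e_1,…,e_m of E of linear-width ℓ, and for I, F ⊆ E define the canonical path from I to F by flipping the edges of I ⊕ F in the order of σ. For any H on this canonical path, letting C = I ⊕ F ⊕ H and κ(X) denote the number of connected components of (V, X), we have |κ(I) + κ(F) − κ(H) − κ(C)| ≤ ℓ. -/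
open Setoid Relation

namespace KappaAux

variable {γ : Type*}

/-- number of equivalence classes -/
noncomputable def nc (s : Setoid γ) : ℕ := Nat.card (Quotient s)

lemma nc_le_of_le [Finite γ] {s t : Setoid γ} (h : s ≤ t) : nc t ≤ nc s := by
  have hsur : Function.Surjective
      (Quotient.map' (fun x => x) (fun a b hab => Setoid.le_def.mp h hab) :
        Quotient s → Quotient t) := by
    intro z; induction z using Quotient.ind with
    | _ v => exact ⟨Quotient.mk'' v, rfl⟩
  exact Nat.card_le_card_of_surjective _ hsur

lemma nc_bot [Finite γ] : nc (⊥ : Setoid γ) = Nat.card γ := by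
  refine Nat.card_eq_of_bijective (Quotient.lift (fun x => x)
    (fun a b hab => hab)) ⟨?_, fun v => ⟨Quotient.mk _ v, rfl⟩⟩
  intro x y hxy
  induction x using Quotient.ind with
  | _ u =>
  induction y using Quotient.ind with
  | _ v =>
  exact Quotient.sound (hxy : u = v)

/-- the setoid generated by identifying `u` and `v` -/
def pair (u v : γ) : Setoid γ := EqvGen.setoid (fun a b => a = u ∧ b = v)

lemma pair_le {u v : γ} {s : Setoid γ} (h : s u v) : pair u v ≤ s :=
  Setoid.eqvGen_le (by rintro x y ⟨rfl, rfl⟩; exact h)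

lemma pair_rel (u v : γ) : (pair u v) u v := EqvGen.rel _ _ ⟨rfl, rfl⟩

lemma sup_pair_rel {s : Setoid γ} {u v a b : γ} (h : (s ⊔ pair u v) a b) :
    s a b ∨ (s a u ∧ s v b) ∨ (s a v ∧ s u b) := by
  let Φ : Setoid γ :=
    ⟨fun a b => s a b ∨ (s a u ∧ s v b) ∨ (s a v ∧ s u b), ?_, ?_, ?_⟩
  · exact (sup_le (fun x y hxy => Or.inl hxy)
      (pair_le (Or.inr (Or.inl ⟨s.refl u, s.refl v⟩))) : s ⊔ pair u v ≤ Φ) h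
  · exact fun x => Or.inl (s.refl x)
  · rintro x y (h1 | ⟨h1, h2⟩ | ⟨h1, h2⟩)
    · exact Or.inl (s.symm h1)
    · exact Or.inr (Or.inr ⟨s.symm h2, s.symm h1⟩)
    · exact Or.inr (Or.inl ⟨s.symm h2, s.symm h1⟩)
  · rintro x y z (h1 | ⟨h1, h2⟩ | ⟨h1, h2⟩) (g1 | ⟨g1, g2⟩ | ⟨g1, g2⟩)
    · exact Or.inl (s.trans h1 g1)
    · exact Or.inr (Or.inl ⟨s.trans h1 g1, g2⟩)
    · exact Or.inr (Or.inr ⟨s.trans h1 g1, g2⟩)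
    · exact Or.inr (Or.inl ⟨h1, s.trans h2 g1⟩)
    · exact Or.inl (s.trans (s.trans h1 (s.symm (s.trans h2 g1))) g2)
    · exact Or.inl (s.trans h1 g2)
    · exact Or.inr (Or.inr ⟨h1, s.trans h2 g1⟩)
    · exact Or.inl (s.trans h1 g2)
    · exact Or.inl (s.trans h1 (s.trans (s.symm g1) (s.trans (s.symm h2) g2)))


lemma nc_le_sup_pair [Finite γ] (s : Setoid γ) (u v : γ) :
    nc s ≤ nc (s ⊔ pair u v) + 1 := by
  classical
  set t := s ⊔ pair u v with ht
  have hst : s ≤ t := le_sup_left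
  let g : Quotient s → Quotient t := Quotient.map' (fun x => x) (fun a b hab => hst hab)
  let f : Quotient s → Quotient t ⊕ Unit := fun x =>
    if x = Quotient.mk s v then Sum.inr () else Sum.inl (g x)
  have hinj : Function.Injective f := by
    intro x y hxy
    induction x using Quotient.ind with
    | _ a =>
    induction y using Quotient.ind with
    | _ b =>
    simp only [f] at hxy
    by_cases hx : (Quotient.mk s a : Quotient s) = Quotient.mk s v <;>
      by_cases hy : (Quotient.mk s b : Quotient s) = Quotient.mk s v
    · rw [hx, hy]
    · rw [if_pos hx, if_neg hy] at hxy; exact absurd hxy.symm (by simp)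
    · rw [if_neg hx, if_pos hy] at hxy; exact absurd hxy (by simp)
    · rw [if_neg hx, if_neg hy] at hxy
      have h2 : (Quotient.mk t a : Quotient t) = Quotient.mk t b := Sum.inl.inj hxy
      rcases sup_pair_rel (Quotient.exact h2) with h | ⟨h1, h2⟩ | ⟨h1, h2⟩
      · exact Quotient.sound h
      · exact absurd (Quotient.sound (s.symm h2) : Quotient.mk s b = _) hy
      · exact absurd (Quotient.sound h1 : Quotient.mk s a = _) hx
  calc nc s ≤ Nat.card (Quotient t ⊕ Unit) := Nat.card_le_card_of_injective f hinj
    _ = nc t + 1 := by simp [nc, Nat.card_sum]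

lemma nc_le_sup_pairs [Finite γ] {ι : Type*} [DecidableEq ι] (t : Finset ι)
    (f : ι → γ × γ) (s₀ : Setoid γ) :
    nc s₀ ≤ nc (s₀ ⊔ t.sup fun i => pair (f i).1 (f i).2) + t.card := by
  classical
  induction t using Finset.induction with
  | empty => simp
  | @insert a t ha ih =>
      rw [Finset.sup_insert, Finset.card_insert_of_notMem ha]
      have hEq : s₀ ⊔ (pair (f a).1 (f a).2 ⊔ t.sup fun i => pair (f i).1 (f i).2)
          = (s₀ ⊔ t.sup fun i => pair (f i).1 (f i).2) ⊔ pair (f a).1 (f a).2 := by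
        rw [sup_comm (pair (f a).1 (f a).2), ← sup_assoc]
      rw [hEq]
      calc nc s₀ ≤ nc (s₀ ⊔ t.sup fun i => pair (f i).1 (f i).2) + t.card := ih
    _ ≤ (nc ((s₀ ⊔ t.sup fun i => pair (f i).1 (f i).2) ⊔ pair (f a).1 (f a).2) + 1)
          + t.card := by
          exact Nat.add_le_add_right (nc_le_sup_pair _ _ _) _
    _ = _ := by omega

/-- submodularity-type inequality -/
lemma K2 [Finite γ] {x x' : Setoid γ} (h : x ≤ x') (y : Setoid γ) :
    nc x' + nc (x ⊔ y) ≤ nc x + nc (x' ⊔ y) := by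
  classical
  haveI : Fintype γ := Fintype.ofFinite γ
  haveI : DecidableEq (Quotient x) := Classical.decEq _
  haveI : Fintype (Quotient x) := Quotient.fintype x
  set W := Quotient x' ⊕ Quotient (x ⊔ y) with hW
  have hx1 : x ≤ x' := h
  have hx2 : x ≤ x ⊔ y := le_sup_left
  let g : Quotient x → W × W := Quotient.lift
    (fun v => ((Sum.inl (Quotient.mk x' v) : W), (Sum.inr (Quotient.mk (x ⊔ y) v) : W)))
    (fun a b hab => by
      try dsimp only
      rw [Quotient.sound (hx1 hab), Quotient.sound (hx2 hab)])
  set σ : Setoid W := (⊥ : Setoid W) ⊔ (Finset.univ.sup fun q : Quotient x =>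
    pair (g q).1 (g q).2) with hσ
  -- generators hold in σ
  have hgen : ∀ v : γ, σ (Sum.inl (Quotient.mk x' v)) (Sum.inr (Quotient.mk (x ⊔ y) v)) := by
    intro v
    have h1 : pair (g (Quotient.mk x v)).1 (g (Quotient.mk x v)).2 ≤ σ := by
      rw [hσ]
      exact le_trans (Finset.le_sup (f := fun q : Quotient x => pair (g q).1 (g q).2)
        (Finset.mem_univ (Quotient.mk x v))) le_sup_right
    exact h1 (pair_rel _ _)
  -- first surjection : Quotient σ → Quotient (x' ⊔ y)
  have h1' : x' ≤ x' ⊔ y := le_sup_left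
  have h2' : x ⊔ y ≤ x' ⊔ y := sup_le (le_trans h le_sup_left) le_sup_right
  let φ₀ : W → Quotient (x' ⊔ y) := Sum.elim
    (Quotient.map' (fun x => x) (fun a b hab => h1' hab))
    (Quotient.map' (fun x => x) (fun a b hab => h2' hab))
  have hφ₀ : ∀ w w' : W, σ w w' → φ₀ w = φ₀ w' := by
    have hle : σ ≤ Setoid.ker φ₀ := by
      rw [hσ]
      refine sup_le bot_le (Finset.sup_le fun q _ => pair_le ?_)
      induction q using Quotient.ind with
      | _ v => rfl
    exact fun w w' hww' => hle hww'
  let φ : Quotient σ → Quotient (x' ⊔ y) := Quotient.lift φ₀ hφ₀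
  have hφsur : Function.Surjective φ := by
    intro z
    induction z using Quotient.ind with
    | _ v => exact ⟨Quotient.mk σ (Sum.inl (Quotient.mk x' v)), rfl⟩
  -- second surjection : Quotient (x' ⊔ y) → Quotient σ
  let ψ₀ : γ → Quotient σ := fun v => Quotient.mk σ (Sum.inl (Quotient.mk x' v))
  have hψ₀ : ∀ a b : γ, (x' ⊔ y) a b → ψ₀ a = ψ₀ b := by
    have hle : x' ⊔ y ≤ Setoid.ker ψ₀ := by
      refine sup_le ?_ ?_
      · intro a b hab
        show Quotient.mk σ (Sum.inl (Quotient.mk x' a))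
          = Quotient.mk σ (Sum.inl (Quotient.mk x' b))
        rw [Quotient.sound (hab : x' a b)]
      · intro a b hab
        have hy' : (x ⊔ y) a b := (le_sup_right : y ≤ x ⊔ y) hab
        show Quotient.mk σ (Sum.inl (Quotient.mk x' a))
          = Quotient.mk σ (Sum.inl (Quotient.mk x' b))
        refine Quotient.sound (σ.trans (hgen a) (σ.trans ?_ (σ.symm (hgen b))))
        have hq : Quotient.mk (x ⊔ y) a = Quotient.mk (x ⊔ y) b := Quotient.sound hy'
        rw [hq]
    exact fun a b hab => hle hab
  let ψ : Quotient (x' ⊔ y) → Quotient σ := Quotient.lift ψ₀ hψ₀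
  have hψsur : Function.Surjective ψ := by
    intro z
    induction z using Quotient.ind with
    | _ w =>
    cases w with
    | inl a =>
        induction a using Quotient.ind with
        | _ v => exact ⟨Quotient.mk _ v, rfl⟩
    | inr a =>
        induction a using Quotient.ind with
        | _ v =>
          refine ⟨Quotient.mk _ v, ?_⟩
          show Quotient.mk σ (Sum.inl (Quotient.mk x' v)) = _
          exact Quotient.sound (hgen v)
  have hcard : nc σ = nc (x' ⊔ y) :=
    le_antisymm (Nat.card_le_card_of_surjective ψ hψsur)
      (Nat.card_le_card_of_surjective φ hφsur)
  have hmain := nc_le_sup_pairs (Finset.univ : Finset (Quotient x))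
    (fun q => ((g q).1, (g q).2)) (⊥ : Setoid W)
  rw [Finset.card_univ] at hmain
  have hbotW : nc (⊥ : Setoid W) = nc x' + nc (x ⊔ y) := by
    rw [nc_bot, hW, Nat.card_sum]; rfl
  have hqx : Fintype.card (Quotient x) = nc x := (Nat.card_eq_fintype_card).symm
  rw [hbotW, hqx, hcard] at hmain
  omega


/-! ### classes meeting / avoiding a set -/

def meets (s : Setoid γ) (T : Set γ) (z : Quotient s) : Prop :=
  ∃ v ∈ T, Quotient.mk s v = z

noncomputable def nM (s : Setoid γ) (T : Set γ) : ℕ :=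
  Nat.card {z : Quotient s // meets s T z}

noncomputable def nA (s : Setoid γ) (T : Set γ) : ℕ :=
  Nat.card {z : Quotient s // ¬ meets s T z}

lemma nat_card_split [Finite γ] (p : γ → Prop) :
    Nat.card γ = Nat.card {x // p x} + Nat.card {x // ¬ p x} := by
  classical
  haveI : Fintype γ := Fintype.ofFinite γ
  simp only [Nat.card_eq_fintype_card]
  rw [Fintype.card_subtype_compl]
  have := Fintype.card_subtype_le p
  omega

lemma nc_eq_nM_add_nA [Finite γ] (s : Setoid γ) (T : Set γ) :
    nc s = nM s T + nA s T :=
  nat_card_split (meets s T)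

lemma sup_rel_of_right_supp {w y : Setoid γ} {T : Set γ}
    (hy : ∀ a b, y a b → a = b ∨ (a ∈ T ∧ b ∈ T)) {u v : γ} (h : (w ⊔ y) u v) :
    w u v ∨ ((∃ p ∈ T, w u p) ∧ ∃ p ∈ T, w v p) := by
  let Φ : Setoid γ :=
    ⟨fun u v => w u v ∨ ((∃ p ∈ T, w u p) ∧ ∃ p ∈ T, w v p), ?_, ?_, ?_⟩
  · refine (sup_le (fun a b hab => Or.inl hab) (fun a b hab => ?_) : w ⊔ y ≤ Φ) h
    rcases hy a b hab with rfl | ⟨ha, hb⟩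
    · exact Or.inl (w.refl a)
    · exact Or.inr ⟨⟨a, ha, w.refl a⟩, ⟨b, hb, w.refl b⟩⟩
  · exact fun a => Or.inl (w.refl a)
  · rintro a b (h1 | ⟨h1, h2⟩)
    · exact Or.inl (w.symm h1)
    · exact Or.inr ⟨h2, h1⟩
  · rintro a b c (h1 | ⟨h1, h2⟩) (g1 | ⟨g1, g2⟩)
    · exact Or.inl (w.trans h1 g1)
    · exact Or.inr ⟨(g1.imp fun p hp => ⟨hp.1, w.trans h1 hp.2⟩), g2⟩
    · exact Or.inr ⟨h1, h2.imp fun p hp => ⟨hp.1, w.trans (w.symm g1) hp.2⟩⟩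
    · exact Or.inr ⟨h1, g2⟩

lemma nA_sup_eq [Finite γ] (w y : Setoid γ) (T : Set γ)
    (hy : ∀ a b, y a b → a = b ∨ (a ∈ T ∧ b ∈ T)) : nA (w ⊔ y) T = nA w T := by
  have hle : w ≤ w ⊔ y := le_sup_left
  let m0 : Quotient w → Quotient (w ⊔ y) :=
    Quotient.map' (fun x => x) (fun a b hab => hle hab)
  have hm0 : ∀ v : γ, m0 (Quotient.mk w v) = Quotient.mk (w ⊔ y) v := fun _ => rfl
  let F : {z : Quotient w // ¬ meets w T z} → {z : Quotient (w ⊔ y) // ¬ meets (w ⊔ y) T z} :=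
    fun z => ⟨m0 z.1, ?_⟩
  swap
  · obtain ⟨z, hz⟩ := z
    induction z using Quotient.ind with
    | _ u =>
    rintro ⟨p, hpT, hpz⟩
    rw [hm0] at hpz
    rcases sup_rel_of_right_supp hy (Quotient.exact hpz) with hw | ⟨_, ⟨t, htT, hut⟩⟩
    · exact hz ⟨p, hpT, Quotient.sound hw⟩
    · exact hz ⟨t, htT, Quotient.sound (w.symm hut)⟩
  symm
  refine Nat.card_eq_of_bijective F ⟨?_, ?_⟩
  · rintro ⟨z, hz⟩ ⟨z', hz'⟩ hzz'
    induction z using Quotient.ind with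
    | _ a =>
    induction z' using Quotient.ind with
    | _ b =>
    have h2 : m0 (Quotient.mk w a) = m0 (Quotient.mk w b) := congrArg Subtype.val hzz'
    rw [hm0, hm0] at h2
    rcases sup_rel_of_right_supp hy (Quotient.exact h2) with hw | ⟨⟨t, htT, hat⟩, _⟩
    · exact Subtype.ext (Quotient.sound hw)
    · exact absurd ⟨t, htT, Quotient.sound (w.symm hat)⟩ hz
  · rintro ⟨Z, hZ⟩
    induction Z using Quotient.ind with
    | _ u =>
    refine ⟨⟨Quotient.mk w u, ?_⟩, Subtype.ext (hm0 u)⟩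
    rintro ⟨p, hpT, hpz⟩
    exact hZ ⟨p, hpT, congrArg m0 hpz⟩

lemma nM_eq_of_le [Finite γ] {s s' : Setoid γ} (T : Set γ) (h : s ≤ s')
    (h2 : ∀ u v, u ∈ T → v ∈ T → s' u v → s u v) : nM s T = nM s' T := by
  let m0 : Quotient s → Quotient s' :=
    Quotient.map' (fun x => x) (fun a b hab => h hab)
  have hm0 : ∀ v : γ, m0 (Quotient.mk s v) = Quotient.mk s' v := fun _ => rfl
  let F : {z : Quotient s // meets s T z} → {z : Quotient s' // meets s' T z} :=
    fun z => ⟨m0 z.1, by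
      obtain ⟨p, hpT, hpz⟩ := z.2
      exact ⟨p, hpT, by rw [← hpz, hm0]⟩⟩
  refine Nat.card_eq_of_bijective F ⟨?_, ?_⟩
  · rintro ⟨z, hp⟩ ⟨z', hp'⟩ hzz'
    obtain ⟨p, hpT, hpz⟩ := hp
    obtain ⟨p', hpT', hpz'⟩ := hp'
    have hval : m0 z = m0 z' := congrArg Subtype.val hzz'
    rw [← hpz, ← hpz', hm0, hm0] at hval
    have hpp : s p p' := h2 p p' hpT hpT' (Quotient.exact hval)
    refine Subtype.ext ?_
    show z = z'
    rw [← hpz, ← hpz']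
    exact Quotient.sound hpp
  · rintro ⟨Z, p, hpT, hpZ⟩
    refine ⟨⟨Quotient.mk s p, ⟨p, hpT, rfl⟩⟩, Subtype.ext ?_⟩
    show m0 (Quotient.mk s p) = Z
    rw [hm0]
    exact hpZ

/-! ### trace of a setoid on a set -/

def trace (x : Setoid γ) (B : Set γ) : Setoid γ :=
  Setoid.mk (fun a b => a = b ∨ (a ∈ B ∧ b ∈ B ∧ x a b))
    ⟨fun a => Or.inl rfl,
     @fun a b h => by
       rcases h with rfl | ⟨ha, hb, hab⟩
       · exact Or.inl rfl
       · exact Or.inr ⟨hb, ha, x.symm hab⟩,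
     @fun a b c h g => by
       rcases h with rfl | ⟨ha, hb, hab⟩ <;> rcases g with rfl | ⟨hb', hc, hbc⟩
       · exact Or.inl rfl
       · exact Or.inr ⟨hb', hc, hbc⟩
       · exact Or.inr ⟨ha, hb, hab⟩
       · exact Or.inr ⟨ha, hc, x.trans hab hbc⟩⟩

lemma trace_rel_iff {x : Setoid γ} {B : Set γ} {a b : γ} :
    trace x B a b ↔ (a = b ∨ (a ∈ B ∧ b ∈ B ∧ x a b)) := Iff.rfl

lemma trace_le (x : Setoid γ) (B : Set γ) : trace x B ≤ x := by
  intro a b h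
  rcases trace_rel_iff.mp h with rfl | ⟨_, _, hab⟩
  · exact x.refl a
  · exact hab

lemma trace_supp (x : Setoid γ) (B : Set γ) :
    ∀ a b, (trace x B) a b → a = b ∨ (a ∈ B ∧ b ∈ B) := by
  intro a b h
  rcases trace_rel_iff.mp h with rfl | ⟨ha, hb, _⟩
  · exact Or.inl rfl
  · exact Or.inr ⟨ha, hb⟩

lemma supp_sup {s t : Setoid γ} {B : Set γ}
    (hs : ∀ a b, s a b → a = b ∨ (a ∈ B ∧ b ∈ B))
    (ht : ∀ a b, t a b → a = b ∨ (a ∈ B ∧ b ∈ B)) :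
    ∀ a b, (s ⊔ t) a b → a = b ∨ (a ∈ B ∧ b ∈ B) := by
  intro a b h
  let Φ : Setoid γ := ⟨fun a b => a = b ∨ (a ∈ B ∧ b ∈ B ∧ (s ⊔ t) a b), fun a => Or.inl rfl,
    ?_, ?_⟩
  case refine_1 =>
    rintro a b (rfl | ⟨ha, hb, hab⟩)
    · exact Or.inl rfl
    · exact Or.inr ⟨hb, ha, (s ⊔ t).symm hab⟩
  case refine_2 =>
    rintro a b c (rfl | ⟨ha, hb, hab⟩) (rfl | ⟨hb', hc, hbc⟩)
    · exact Or.inl rfl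
    · exact Or.inr ⟨hb', hc, hbc⟩
    · exact Or.inr ⟨ha, hb, hab⟩
    · exact Or.inr ⟨ha, hc, (s ⊔ t).trans hab hbc⟩
  have hΦ : s ⊔ t ≤ Φ := by
    refine sup_le (fun a b hab => ?_) (fun a b hab => ?_)
    · rcases hs a b hab with rfl | ⟨ha, hb⟩
      · exact Or.inl rfl
      · exact Or.inr ⟨ha, hb, (le_sup_left : s ≤ s ⊔ t) hab⟩
    · rcases ht a b hab with rfl | ⟨ha, hb⟩
      · exact Or.inl rfl
      · exact Or.inr ⟨ha, hb, (le_sup_right : t ≤ s ⊔ t) hab⟩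
  rcases hΦ h with h' | ⟨ha, hb, _⟩
  · exact Or.inl h'
  · exact Or.inr ⟨ha, hb⟩

lemma card_le_nc_add [Finite γ] (s : Setoid γ) (B : Set γ)
    (hs : ∀ a b, s a b → a = b ∨ (a ∈ B ∧ b ∈ B)) :
    Nat.card γ ≤ nc s + Nat.card B := by
  have hinj : Function.Injective (fun v : {v : γ // v ∉ B} => Quotient.mk s v.1) := by
    rintro ⟨a, ha⟩ ⟨b, hb⟩ hab
    rcases hs a b (Quotient.exact hab) with rfl | ⟨haB, _⟩
    · rfl
    · exact absurd haB ha
  have h1 : Nat.card {v : γ // v ∉ B} ≤ nc s := Nat.card_le_card_of_injective _ hinj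
  have h2 : Nat.card γ = Nat.card {v : γ // v ∈ B} + Nat.card {v : γ // v ∉ B} :=
    nat_card_split _
  have h3 : Nat.card B = Nat.card {v : γ // v ∈ B} := rfl
  omega


lemma trace_sup_rel {x y : Setoid γ} {L T B : Set γ}
    (hx : ∀ a b, x a b → a = b ∨ (a ∈ L ∧ b ∈ L))
    (hy : ∀ a b, y a b → a = b ∨ (a ∈ T ∧ b ∈ T))
    (hLT : ∀ v, v ∈ L → v ∈ T → v ∈ B)
    {u v : γ} (hu : u ∈ T) (hv : v ∈ T) (h : (x ⊔ y) u v) :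
    (trace x B ⊔ y) u v := by
  have key : ∀ a b, a ∈ T → b ∈ T → x a b → (trace x B) a b := by
    intro a b haT hbT hab
    rcases hx a b hab with rfl | ⟨haL, hbL⟩
    · exact trace_rel_iff.mpr (Or.inl rfl)
    · exact trace_rel_iff.mpr (Or.inr ⟨hLT a haL haT, hLT b hbL hbT, hab⟩)
  let Ψ : Setoid γ := ⟨fun u v => x u v ∨
      ∃ u' v', u' ∈ T ∧ v' ∈ T ∧ x u u' ∧ (trace x B ⊔ y) u' v' ∧ x v' v, ?_, ?_, ?_⟩
  · have hΨ : x ⊔ y ≤ Ψ := by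
      refine sup_le (fun a b hab => Or.inl hab) (fun a b hab => ?_)
      rcases hy a b hab with rfl | ⟨ha, hb⟩
      · exact Or.inl (x.refl a)
      · exact Or.inr ⟨a, b, ha, hb, x.refl a, (le_sup_right : y ≤ trace x B ⊔ y) hab, x.refl b⟩
    rcases hΨ h with h' | ⟨u', v', hu', hv', h1, h2, h3⟩
    · exact (le_sup_left : trace x B ≤ _) (key u v hu hv h')
    · refine (trace x B ⊔ y).trans ((le_sup_left : trace x B ≤ _) (key u u' hu hu' h1))
        ((trace x B ⊔ y).trans h2 ((le_sup_left : trace x B ≤ _) (key v' v hv' hv h3)))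
  · exact fun a => Or.inl (x.refl a)
  · rintro a b (h1 | ⟨u', v', hu', hv', h1, h2, h3⟩)
    · exact Or.inl (x.symm h1)
    · exact Or.inr ⟨v', u', hv', hu', x.symm h3, (trace x B ⊔ y).symm h2, x.symm h1⟩
  · rintro a b c (h1 | ⟨u', v', hu', hv', h1, h2, h3⟩) (g1 | ⟨u'', v'', hu'', hv'', g1, g2, g3⟩)
    · exact Or.inl (x.trans h1 g1)
    · exact Or.inr ⟨u'', v'', hu'', hv'', x.trans h1 g1, g2, g3⟩
    · exact Or.inr ⟨u', v', hu', hv', h1, h2, x.trans h3 g1⟩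
    · refine Or.inr ⟨u', v'', hu', hv'', h1, ?_, g3⟩
      exact (trace x B ⊔ y).trans h2 ((trace x B ⊔ y).trans
        ((le_sup_left : trace x B ≤ _) (key v' u'' hv' hu'' (x.trans h3 g1))) g2)

/-- the trace replacement lemma -/
lemma nc_trace_step [Finite γ] (x y : Setoid γ) (L R B : Set γ)
    (hx : ∀ a b, x a b → a = b ∨ (a ∈ L ∧ b ∈ L))
    (hy : ∀ a b, y a b → a = b ∨ (a ∈ R ∧ b ∈ R))
    (hB : ∀ v, v ∈ L → v ∈ R → v ∈ B) (hBL : B ⊆ L) :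
    nc (x ⊔ y) + nc (trace x B) = nc (trace x B ⊔ y) + nc x := by
  classical
  set T : Set γ := B ∪ R with hT
  have hyT : ∀ a b, y a b → a = b ∨ (a ∈ T ∧ b ∈ T) := by
    intro a b hab
    rcases hy a b hab with rfl | ⟨ha, hb⟩
    · exact Or.inl rfl
    · exact Or.inr ⟨Or.inr ha, Or.inr hb⟩
  have hLT : ∀ v, v ∈ L → v ∈ T → v ∈ B := by
    rintro w hwL (hwB | hwR)
    · exact hwB
    · exact hB w hwL hwR
  -- the four splittings
  have e1 := nc_eq_nM_add_nA (x ⊔ y) T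
  have e2 := nc_eq_nM_add_nA (trace x B) T
  have e3 := nc_eq_nM_add_nA (trace x B ⊔ y) T
  have e4 := nc_eq_nM_add_nA x T
  -- avoiding classes are untouched by y
  have a1 : nA (x ⊔ y) T = nA x T := nA_sup_eq x y T hyT
  have a2 : nA (trace x B ⊔ y) T = nA (trace x B) T := nA_sup_eq (trace x B) y T hyT
  -- meeting classes only depend on the trace
  have m1 : nM (trace x B) T = nM x T := by
    refine nM_eq_of_le T (trace_le x B) ?_
    intro u v huT hvT huv
    rcases hx u v huv with rfl | ⟨huL, hvL⟩
    · exact trace_rel_iff.mpr (Or.inl rfl)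
    · exact trace_rel_iff.mpr (Or.inr ⟨hLT u huL huT, hLT v hvL hvT, huv⟩)
  have m2 : nM (trace x B ⊔ y) T = nM (x ⊔ y) T := by
    refine nM_eq_of_le T (sup_le_sup_right (trace_le x B) y) ?_
    intro u v huT hvT huv
    exact trace_sup_rel hx hyT hLT huT hvT huv
  omega

/-- The main abstract inequality. -/
theorem abstract_bound [Finite γ] (a b c d : Setoid γ) (L R : Set γ)
    (ha : ∀ u v, a u v → u = v ∨ (u ∈ L ∧ v ∈ L))
    (hb : ∀ u v, b u v → u = v ∨ (u ∈ L ∧ v ∈ L))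
    (hc : ∀ u v, c u v → u = v ∨ (u ∈ R ∧ v ∈ R))
    (hd : ∀ u v, d u v → u = v ∨ (u ∈ R ∧ v ∈ R)) :
    |(nc (a ⊔ c) : ℤ) + nc (b ⊔ d) - nc (b ⊔ c) - nc (a ⊔ d)| ≤ Nat.card ↥(L ∩ R) := by
  classical
  set B : Set γ := L ∩ R with hB
  have hBmem : ∀ v, v ∈ L → v ∈ R → v ∈ B := fun v h1 h2 => ⟨h1, h2⟩
  have hBL : B ⊆ L := Set.inter_subset_left
  set a' : Setoid γ := trace a B with ha'
  set b' : Setoid γ := trace b B with hb'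
  -- trace replacement
  have t1 := nc_trace_step a c L R B ha hc hBmem hBL
  have t2 := nc_trace_step a d L R B ha hd hBmem hBL
  have t3 := nc_trace_step b c L R B hb hc hBmem hBL
  have t4 := nc_trace_step b d L R B hb hd hBmem hBL
  rw [← ha'] at t1 t2
  rw [← hb'] at t3 t4
  -- supports of the traces
  have ha's : ∀ u v, a' u v → u = v ∨ (u ∈ B ∧ v ∈ B) := trace_supp a B
  have hb's : ∀ u v, b' u v → u = v ∨ (u ∈ B ∧ v ∈ B) := trace_supp b B
  set w : Setoid γ := a' ⊔ b' with hw
  have hws : ∀ u v, w u v → u = v ∨ (u ∈ B ∧ v ∈ B) := supp_sup ha's hb's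
  -- boundary bound
  have hcard : Nat.card γ ≤ nc w + Nat.card ↥B := card_le_nc_add w B hws
  -- monotonicity facts
  have M1 : nc (a' ⊔ c) ≤ nc c := nc_le_of_le le_sup_right
  have M2 : nc (b' ⊔ c) ≤ nc c := nc_le_of_le le_sup_right
  have M3 : nc (a' ⊔ d) ≤ nc d := nc_le_of_le le_sup_right
  have M4 : nc (b' ⊔ d) ≤ nc d := nc_le_of_le le_sup_right
  -- K2 with bottom
  have Ka : nc a' + nc c ≤ Nat.card γ + nc (a' ⊔ c) := by
    have := K2 (bot_le : (⊥ : Setoid γ) ≤ a') c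
    rwa [nc_bot, bot_sup_eq] at this
  have Kb : nc b' + nc c ≤ Nat.card γ + nc (b' ⊔ c) := by
    have := K2 (bot_le : (⊥ : Setoid γ) ≤ b') c
    rwa [nc_bot, bot_sup_eq] at this
  have Kc : nc a' + nc d ≤ Nat.card γ + nc (a' ⊔ d) := by
    have := K2 (bot_le : (⊥ : Setoid γ) ≤ a') d
    rwa [nc_bot, bot_sup_eq] at this
  have Kd : nc b' + nc d ≤ Nat.card γ + nc (b' ⊔ d) := by
    have := K2 (bot_le : (⊥ : Setoid γ) ≤ b') d
    rwa [nc_bot, bot_sup_eq] at this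
  -- K2 with the join w
  have P1 : nc w + nc (a' ⊔ c) ≤ nc a' + nc (w ⊔ c) := K2 le_sup_left c
  have P2 : nc w + nc (b' ⊔ c) ≤ nc b' + nc (w ⊔ c) := K2 le_sup_right c
  have P3 : nc w + nc (a' ⊔ d) ≤ nc a' + nc (w ⊔ d) := K2 le_sup_left d
  have P4 : nc w + nc (b' ⊔ d) ≤ nc b' + nc (w ⊔ d) := K2 le_sup_right d
  have N1 : nc (w ⊔ c) ≤ nc (a' ⊔ c) := nc_le_of_le (sup_le_sup_right le_sup_left c)
  have N2 : nc (w ⊔ c) ≤ nc (b' ⊔ c) := nc_le_of_le (sup_le_sup_right le_sup_right c)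
  have N3 : nc (w ⊔ d) ≤ nc (a' ⊔ d) := nc_le_of_le (sup_le_sup_right le_sup_left d)
  have N4 : nc (w ⊔ d) ≤ nc (b' ⊔ d) := nc_le_of_le (sup_le_sup_right le_sup_right d)
  rw [abs_le]
  constructor <;> [skip; skip] <;> push_cast <;> omega


/-! ### graphs from indexed edge sets -/

section Graph

variable {V : Type*} [Fintype V] {m : ℕ} (e : Fin m → Sym2 V)

def GS (X : Finset (Fin m)) : SimpleGraph V :=
  SimpleGraph.fromEdgeSet {s : Sym2 V | ∃ i ∈ X, e i = s}

def st (X : Finset (Fin m)) : Setoid V := (GS e X).reachableSetoid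

lemma GS_union (X Y : Finset (Fin m)) : GS e (X ∪ Y) = GS e X ⊔ GS e Y := by
  rw [GS, GS, GS, ← SimpleGraph.fromEdgeSet_union]
  congr 1
  ext s
  simp only [Set.mem_setOf_eq, Set.mem_union, Finset.mem_union]
  constructor
  · rintro ⟨i, hi | hi, rfl⟩
    · exact Or.inl ⟨i, hi, rfl⟩
    · exact Or.inr ⟨i, hi, rfl⟩
  · rintro (⟨i, hi, rfl⟩ | ⟨i, hi, rfl⟩)
    · exact ⟨i, Or.inl hi, rfl⟩
    · exact ⟨i, Or.inr hi, rfl⟩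

lemma st_union (X Y : Finset (Fin m)) : st e (X ∪ Y) = st e X ⊔ st e Y := by
  apply le_antisymm
  · intro u v h
    have h' : (GS e X ⊔ GS e Y).Reachable u v := by
      rw [← GS_union]; exact h
    rw [SimpleGraph.reachable_iff_reflTransGen] at h'
    clear h
    induction h' with
    | refl => exact (st e X ⊔ st e Y).refl u
    | tail hsteps hadj ih =>
        refine (st e X ⊔ st e Y).trans ih ?_
        rcases hadj with h1 | h2
        · exact (le_sup_left : st e X ≤ st e X ⊔ st e Y) h1.reachable
        · exact (le_sup_right : st e Y ≤ st e X ⊔ st e Y) h2.reachable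
  · refine sup_le ?_ ?_ <;> intro u v h
    · refine SimpleGraph.Reachable.mono ?_ (h : (GS e X).Reachable u v)
      rw [GS_union]; exact le_sup_left
    · refine SimpleGraph.Reachable.mono ?_ (h : (GS e Y).Reachable u v)
      rw [GS_union]; exact le_sup_right

lemma st_supp (X : Finset (Fin m)) (p : Fin m → Prop) (hX : ∀ j ∈ X, p j) :
    ∀ u v, st e X u v → u = v ∨
      (u ∈ {w : V | ∃ j, p j ∧ w ∈ e j} ∧ v ∈ {w : V | ∃ j, p j ∧ w ∈ e j}) := by
  have hadj : ∀ u w : V, (GS e X).Adj u w → ∃ j, p j ∧ u ∈ e j := by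
    intro u w h
    rw [GS, SimpleGraph.fromEdgeSet_adj] at h
    obtain ⟨⟨i, hiX, hei⟩, hne⟩ := h
    refine ⟨i, hX i hiX, ?_⟩
    rw [hei]
    exact Sym2.mem_mk_left u w
  have key : ∀ a b : V, (GS e X).Reachable a b → a ≠ b → ∃ j, p j ∧ a ∈ e j := by
    intro a b hr hne
    obtain ⟨w⟩ := hr
    cases w with
    | nil => exact absurd rfl hne
    | cons h' _ => exact hadj _ _ h'
  intro u v h
  by_cases huv : u = v
  · exact Or.inl huv
  · have hr : (GS e X).Reachable u v := h
    exact Or.inr ⟨key u v hr huv, key v u hr.symm (Ne.symm huv)⟩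

end Graph

end KappaAux

/-- The number of connected components (including isolated vertices) of the spanning
subgraph of `V` whose edges are the edges `e i` for `i ∈ X`. -/
noncomputable def kappa {V : Type*} [Fintype V] {m : ℕ} (e : Fin m → Sym2 V)
    (X : Finset (Fin m)) : ℕ :=
  Nat.card (SimpleGraph.fromEdgeSet {s : Sym2 V | ∃ i ∈ X, e i = s}).ConnectedComponent

namespace KappaAux

lemma kappa_eq_nc {V : Type*} [Fintype V] {m : ℕ} (e : Fin m → Sym2 V)
    (X : Finset (Fin m)) : kappa e X = nc (st e X) :=
  Nat.card_congr ⟨fun x => x, fun x => x, fun _ => rfl, fun _ => rfl⟩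

end KappaAux

open KappaAux in
/-- Let `G = (V, E)` be a graph with an ordering `e₁, …, e_m` of its edges of linear-width
`ℓ`, and for `I, F ⊆ E` consider the canonical path from `I` to `F` flipping the edges of
`I ⊕ F` in order.  For any `H` on this canonical path (i.e. `H = (F ∩ Q) ∪ (I ∩ Qᶜ)` for a
prefix `Q` of the ordering), with `C = I ⊕ F ⊕ H`,
`|κ(I) + κ(F) − κ(H) − κ(C)| ≤ ℓ`. -/
theorem kappa_canonical_path_bound {V : Type*} [Fintype V] [DecidableEq V] {m : ℕ}
    (e : Fin m → Sym2 V) (hinj : Function.Injective e) (hndiag : ∀ i, ¬(e i).IsDiag)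
    (ℓ : ℕ)
    (hlw : ∀ i : Fin m,
      Nat.card {v : V // (∃ j, j < i ∧ v ∈ e j) ∧ ∃ j, i ≤ j ∧ v ∈ e j} ≤ ℓ)
    (I F : Finset (Fin m)) (q : ℕ) (H C : Finset (Fin m))
    (hH : H = (F.filter fun j : Fin m => (j : ℕ) < q) ∪ (I.filter fun j : Fin m => ¬(j : ℕ) < q))
    (hC : C = symmDiff (symmDiff I F) H) :
    |(kappa e I : ℤ) + kappa e F - kappa e H - kappa e C| ≤ ℓ := by
  classical
  by_cases hq : q < m
  · -- main case
    set i₀ : Fin m := ⟨q, hq⟩ with hi₀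
    set A1 := I.filter (fun j : Fin m => (j : ℕ) < q) with hA1
    set A2 := I.filter (fun j : Fin m => ¬(j : ℕ) < q) with hA2
    set B1 := F.filter (fun j : Fin m => (j : ℕ) < q) with hB1
    set B2 := F.filter (fun j : Fin m => ¬(j : ℕ) < q) with hB2
    have hI : I = A1 ∪ A2 := (Finset.filter_union_filter_not_eq _ I).symm
    have hF : F = B1 ∪ B2 := (Finset.filter_union_filter_not_eq _ F).symm
    have hHu : H = B1 ∪ A2 := hH
    have hCu : C = A1 ∪ B2 := by
      rw [hC, hHu]
      ext j
      simp only [Finset.mem_symmDiff, Finset.mem_union, hA1, hA2, hB1, hB2,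
        Finset.mem_filter]
      by_cases hj : (j : ℕ) < q <;> simp [hj] <;> tauto
    set L : Set V := {w : V | ∃ j : Fin m, (j : ℕ) < q ∧ w ∈ e j} with hL
    set R : Set V := {w : V | ∃ j : Fin m, ¬(j : ℕ) < q ∧ w ∈ e j} with hR
    have hsA1 := st_supp e A1 (fun j => (j : ℕ) < q)
      (fun j hj => (Finset.mem_filter.mp hj).2)
    have hsB1 := st_supp e B1 (fun j => (j : ℕ) < q)
      (fun j hj => (Finset.mem_filter.mp hj).2)
    have hsA2 := st_supp e A2 (fun j => ¬(j : ℕ) < q)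
      (fun j hj => (Finset.mem_filter.mp hj).2)
    have hsB2 := st_supp e B2 (fun j => ¬(j : ℕ) < q)
      (fun j hj => (Finset.mem_filter.mp hj).2)
    have habs := abstract_bound (st e A1) (st e B1) (st e A2) (st e B2) L R
      hsA1 hsB1 hsA2 hsB2
    have kI : (kappa e I : ℤ) = nc (st e A1 ⊔ st e A2) := by
      rw [hI, kappa_eq_nc, st_union]
    have kF : (kappa e F : ℤ) = nc (st e B1 ⊔ st e B2) := by
      rw [hF, kappa_eq_nc, st_union]
    have kH : (kappa e H : ℤ) = nc (st e B1 ⊔ st e A2) := by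
      rw [hHu, kappa_eq_nc, st_union]
    have kC : (kappa e C : ℤ) = nc (st e A1 ⊔ st e B2) := by
      rw [hCu, kappa_eq_nc, st_union]
    rw [kI, kF, kH, kC]
    refine le_trans habs ?_
    have hcard : Nat.card ↥(L ∩ R) ≤ ℓ := by
      refine le_trans (le_of_eq (Nat.card_congr
        (Equiv.subtypeEquivRight (fun v => ?_)))) (hlw i₀)
      constructor
      · rintro ⟨⟨j, hj, hv⟩, ⟨j', hj', hv'⟩⟩
        exact ⟨⟨j, Fin.lt_def.mpr hj, hv⟩, ⟨j', Fin.le_def.mpr (not_lt.mp hj'), hv'⟩⟩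
      · rintro ⟨⟨j, hj, hv⟩, ⟨j', hj', hv'⟩⟩
        exact ⟨⟨j, Fin.lt_def.mp hj, hv⟩, ⟨j', not_lt.mpr (Fin.le_def.mp hj'), hv'⟩⟩
    exact_mod_cast hcard
  · -- degenerate case : H = F, C = I
    have hqm : ∀ j : Fin m, (j : ℕ) < q := fun j => lt_of_lt_of_le j.isLt (not_lt.mp hq)
    have hH' : H = F := by
      rw [hH, Finset.filter_true_of_mem (fun j _ => hqm j),
        Finset.filter_false_of_mem (fun j _ => not_not_intro (hqm j)), Finset.union_empty]
    have hC' : C = I := by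
      rw [hC, hH', symmDiff_assoc, symmDiff_self, symmDiff_bot]
    rw [hH', hC']
    have hzero : (kappa e I : ℤ) + kappa e F - kappa e F - kappa e I = 0 := by ring
    rw [hzero]
    simp
end
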